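/- Let G be a non-bipartite graph with chromatic number 3. Then the power thickness θ(G) equals 1 if and only if the circular chromatic number χ_c(G) equals 3. -/

import Mathlib

structure PGraph where
  V : Type
  Adj : V → V → Prop
  symm : ∀ u v, Adj u v → Adj v u

namespace PGraph

/-- There is a walk of length exactly `n` from `u` to `v`. -/
def walkLen (G : PGraph) : ℕ → G.V → G.V → Prop
  | 0, u, v => u = v
  | n+1, u, v => ∃ w, G.Adj u w ∧ G.walkLen n w v

theorem walkLen_concat (G : PGraph) : ∀ (n : ℕ) (u v w : G.V),
    G.walkLen n u v → G.Adj v w → G.walkLen (n+1) u w := by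
  intro n
  induction n with
  | zero =>
      intro u v w h hadj
      cases h
      exact ⟨w, hadj, rfl⟩
  | succ n ih =>
      rintro u v w ⟨x, hux, hxv⟩ hadj
      exact ⟨x, hux, ih x v w hxv hadj⟩

theorem walkLen_symm (G : PGraph) : ∀ (n : ℕ) (u v : G.V),
    G.walkLen n u v → G.walkLen n v u := by
  intro n
  induction n with
  | zero => intro u v h; exact h.symm
  | succ n ih =>
      rintro u v ⟨w, huw, hwv⟩
      exact G.walkLen_concat n v w u (ih w v hwv) (G.symm u w huw)

/-- The `k`-th power of a graph: same vertices, adjacency = existence of a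
walk of length exactly `k` (loops allowed). -/
def pow (G : PGraph) (k : ℕ) : PGraph where
  V := G.V
  Adj u v := G.walkLen k u v
  symm := G.walkLen_symm k

/-- Existence of a graph homomorphism. -/
def homTo (G H : PGraph) : Prop :=
  ∃ f : G.V → H.V, ∀ u v, G.Adj u v → H.Adj (f u) (f v)

/-- The `(2s+1)`-subdivision `S_{2s+1}(G)`: every edge is replaced by a path
of length `2s+1`.  Following the paper's notation, the ordered pair `(u,v)`
(with `u ~ v`) carries the `s` inner vertices `(uv)_1, …, (uv)_s`. -/
def subdiv (G : PGraph) (s : ℕ) : PGraph where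
  V := G.V ⊕ ({p : G.V × G.V // G.Adj p.1 p.2} × Fin s)
  Adj x y :=
    match x, y with
    | Sum.inl u, Sum.inl v => s = 0 ∧ G.Adj u v
    | Sum.inl u, Sum.inr (e, k) => u = e.1.2 ∧ (k : ℕ) = s - 1
    | Sum.inr (e, k), Sum.inl u => u = e.1.2 ∧ (k : ℕ) = s - 1
    | Sum.inr (e, k), Sum.inr (e', l) =>
        e'.1.1 = e.1.2 ∧ e'.1.2 = e.1.1 ∧
        ((k : ℕ) + (l : ℕ) + 2 = s ∨ (k : ℕ) + (l : ℕ) + 2 = s + 1)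
  symm := by
    rintro (u | ⟨e, k⟩) (v | ⟨e', l⟩) h
    · exact ⟨h.1, G.symm _ _ h.2⟩
    · exact h
    · exact h
    · obtain ⟨h1, h2, h3⟩ := h
      exact ⟨h2.symm, h1.symm, by omega⟩

/-- `q < og(G)`: the rational `q` is smaller than the odd girth of `G`
(the length of a shortest odd closed walk; vacuously true if `G` is bipartite). -/
def ltOddGirth (G : PGraph) (q : ℚ) : Prop :=
  ∀ n : ℕ, Odd n → (∃ v, G.walkLen n v v) → q < (n : ℚ)

/-- A graph is non-bipartite iff it contains an odd closed walk. -/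
def Nonbipartite (G : PGraph) : Prop :=
  ∃ (n : ℕ) (v : G.V), Odd n ∧ G.walkLen n v v

/-- The odd girth, as an extended natural number (`⊤` for bipartite graphs). -/
noncomputable def oddGirth (G : PGraph) : ℕ∞ :=
  sInf {N : ℕ∞ | ∃ n : ℕ, N = (n : ℕ∞) ∧ Odd n ∧ ∃ v, G.walkLen n v v}

/-- The complete graph on `m` vertices. -/
def completeGraph (m : ℕ) : PGraph :=
  ⟨Fin m, fun u v => u ≠ v, fun _ _ h => h.symm⟩

/-- The chromatic number: least `m` such that `G` maps homomorphically to `K_m`. -/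
noncomputable def chromatic (G : PGraph) : ℕ :=
  sInf {m : ℕ | G.homTo (completeGraph m)}

/-- The `i`-th power thickness
`θ_i(G) = sup { (2r+1)/(2s+1) | χ(G^{(2r+1)/(2s+1)}) ≤ χ(G)+i, (2r+1)/(2s+1) < og(G) }`. -/
noncomputable def powerThickness (G : PGraph) (i : ℤ) : ℝ :=
  sSup {x : ℝ | ∃ r s : ℕ, x = (2*(r:ℝ)+1)/(2*(s:ℝ)+1) ∧
    ((((G.subdiv s).pow (2*r+1)).chromatic : ℤ) ≤ (G.chromatic : ℤ) + i) ∧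
    G.ltOddGirth ((2*(r:ℚ)+1)/(2*(s:ℚ)+1))}

/-- The graph `H^{-1/(2r+1)}`. -/
def negPow (H : PGraph) (r : ℕ) : PGraph where
  V := {A : Fin (r+1) → Set H.V //
        (∃ v, A 0 = {v}) ∧
        ∀ i : Fin (r+1), (A i).Nonempty ∧ A i ⊆ {u | ∃ v ∈ A 0, H.walkLen i v u}}
  Adj A B :=
    (∀ i j : Fin (r+1), (j : ℕ) = (i : ℕ) + 1 → A.1 i ⊆ B.1 j ∧ B.1 i ⊆ A.1 j) ∧
    ∀ j : Fin (r+1), ∀ a ∈ A.1 j, ∀ b ∈ B.1 j, H.Adj a b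
  symm := by
    rintro A B ⟨h1, h2⟩
    exact ⟨fun i j hij => ⟨(h1 i j hij).2, (h1 i j hij).1⟩,
           fun j b hb a ha => H.symm _ _ (h2 j a ha b hb)⟩

/-- The circular complete graph `K_{n/d}`. -/
def circGraph (n d : ℕ) : PGraph where
  V := Fin n
  Adj u v := (d : ℤ) ≤ |(u : ℤ) - (v : ℤ)| ∧ |(u : ℤ) - (v : ℤ)| ≤ (n : ℤ) - d
  symm := by
    intro u v h
    rwa [abs_sub_comm]

/-- The circular chromatic number, as a real number. -/
noncomputable def circChrom (G : PGraph) : ℝ :=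
  sInf {x : ℝ | ∃ n d : ℕ, 0 < d ∧ 2 * d ≤ n ∧ Nat.gcd n d = 1 ∧
    x = (n : ℝ) / (d : ℝ) ∧ G.homTo (circGraph n d)}

/-- The cycle on `m` vertices. -/
def cycleGraph (m : ℕ) : PGraph :=
  ⟨ZMod m, fun i j => i = j + 1 ∨ j = i + 1, fun _ _ h => h.symm⟩

/-- Graph isomorphism. -/
def Isom (G H : PGraph) : Prop :=
  ∃ f : G.V ≃ H.V, ∀ u v, G.Adj u v ↔ H.Adj (f u) (f v)

/-- The helical graph `H(m,n,k)`. -/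
def helical (m n k : ℕ) : PGraph where
  V := {A : Fin k → Set (Fin m) //
        (∀ h : 0 < k, (A ⟨0, h⟩).ncard = n) ∧
        (∀ i, n ≤ (A i).ncard) ∧
        (∀ i : Fin k, ∀ h : (i : ℕ) + 1 < k, A i ∩ A ⟨(i : ℕ) + 1, h⟩ = ∅) ∧
        (∀ i : Fin k, ∀ h : (i : ℕ) + 2 < k, A i ⊆ A ⟨(i : ℕ) + 2, h⟩)}
  Adj A B :=
    (∀ i, A.1 i ∩ B.1 i = ∅) ∧
    (∀ i : Fin k, ∀ h : (i : ℕ) + 1 < k,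
      A.1 i ⊆ B.1 ⟨(i : ℕ) + 1, h⟩ ∧ B.1 i ⊆ A.1 ⟨(i : ℕ) + 1, h⟩)
  symm := by
    rintro A B ⟨h1, h2⟩
    refine ⟨fun i => ?_, fun i h => ⟨(h2 i h).2, (h2 i h).1⟩⟩
    rw [Set.inter_comm]
    exact h1 i

/-- A graph with chromatic number `k` is colorful if every proper `k`-coloring
admits a (nonempty) induced subgraph all of whose vertices see all `k` colors in
their closed neighborhood. -/
def Colorful (G : PGraph) : Prop :=
  ∀ c : G.V → Fin G.chromatic, (∀ u v, G.Adj u v → c u ≠ c v) →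
    ∃ S : Set G.V, S.Nonempty ∧
      ∀ v ∈ S, ∀ col : Fin G.chromatic,
        ∃ u ∈ S, (u = v ∨ G.Adj v u) ∧ c u = col

end PGraph

open PGraph
section Infra

open PGraph

/-! ### Walk infrastructure -/

theorem aux_walk_trans (G : PGraph) : ∀ (a : ℕ) {b : ℕ} {x y z : G.V},
    G.walkLen a x y → G.walkLen b y z → G.walkLen (a + b) x z := by
  intro a
  induction a with
  | zero => intro b x y z h h2; cases h; simpa using h2
  | succ n ih =>
      intro b x y z h h2
      obtain ⟨w, hxw, hwy⟩ := h
      have h3 : G.walkLen (n + b) w z := ih hwy h2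
      have : n + 1 + b = (n + b) + 1 := by omega
      rw [this]
      exact ⟨w, hxw, h3⟩

theorem aux_walk_split (G : PGraph) : ∀ (a : ℕ) {b : ℕ} {x z : G.V},
    G.walkLen (a + b) x z → ∃ y, G.walkLen a x y ∧ G.walkLen b y z := by
  intro a
  induction a with
  | zero => intro b x z h; exact ⟨x, rfl, by simpa using h⟩
  | succ n ih =>
      intro b x z h
      have e : n + 1 + b = (n + b) + 1 := by omega
      rw [e] at h
      obtain ⟨w, hxw, hwz⟩ := h
      obtain ⟨y, h1, h2⟩ := ih hwz
      exact ⟨y, ⟨w, hxw, h1⟩, h2⟩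

theorem aux_walk_src (G : PGraph) {n : ℕ} {x y : G.V} (h : G.walkLen n x y) (hn : 1 ≤ n) :
    ∃ w, G.Adj x w := by
  obtain ⟨m, rfl⟩ : ∃ m, n = m + 1 := ⟨n - 1, by omega⟩
  obtain ⟨w, hw, -⟩ := h
  exact ⟨w, hw⟩

theorem aux_walk_tgt (G : PGraph) {n : ℕ} {x y : G.V} (h : G.walkLen n x y) (hn : 1 ≤ n) :
    ∃ w, G.Adj y w := aux_walk_src G (G.walkLen_symm n x y h) hn

theorem aux_walk_pad2 (G : PGraph) {n : ℕ} {x y : G.V} (hy : ∃ w, G.Adj y w)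
    (h : G.walkLen n x y) : G.walkLen (n + 2) x y := by
  obtain ⟨w, hw⟩ := hy
  exact G.walkLen_concat (n+1) x w y (G.walkLen_concat n x y w h hw) (G.symm y w hw)

theorem aux_walk_padEven (G : PGraph) (e : ℕ) {n : ℕ} {x y : G.V} (hy : ∃ w, G.Adj y w)
    (h : G.walkLen n x y) : G.walkLen (n + 2 * e) x y := by
  induction e with
  | zero => simpa using h
  | succ m ih =>
      have : n + 2 * (m + 1) = (n + 2 * m) + 2 := by omega
      rw [this]
      exact aux_walk_pad2 G hy ih

/-! ### Homomorphism and chromatic number infrastructure -/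

theorem aux_homTo_trans {G H K : PGraph} (h1 : G.homTo H) (h2 : H.homTo K) : G.homTo K := by
  obtain ⟨f, hf⟩ := h1
  obtain ⟨g, hg⟩ := h2
  exact ⟨g ∘ f, fun u v huv => hg _ _ (hf u v huv)⟩

theorem aux_hom_complete_mono {a b : ℕ} (h : a ≤ b) :
    (completeGraph a).homTo (completeGraph b) := by
  refine ⟨Fin.castLE h, fun u v huv => ?_⟩
  intro e
  exact huv (Fin.castLE_injective h e)

theorem aux_hom_walk {G H : PGraph} {f : G.V → H.V}
    (hf : ∀ u v, G.Adj u v → H.Adj (f u) (f v)) :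
    ∀ (n : ℕ) {x y : G.V}, G.walkLen n x y → H.walkLen n (f x) (f y) := by
  intro n
  induction n with
  | zero => intro x y h; cases h; rfl
  | succ m ih =>
      rintro x y ⟨w, hxw, hwy⟩
      exact ⟨f w, hf _ _ hxw, ih hwy⟩

theorem aux_chromatic_le {G : PGraph} {k : ℕ} (h : G.homTo (completeGraph k)) :
    G.chromatic ≤ k := Nat.sInf_le h

theorem aux_chromatic_hom {G : PGraph} (hne : {m : ℕ | G.homTo (completeGraph m)}.Nonempty) :
    G.homTo (completeGraph G.chromatic) := Nat.sInf_mem hne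

/-! ### Modular step-walk lemma -/

theorem aux_step_walk (H : PGraph) (M : ℕ) (Θ : H.V → ℤ)
    (hstep : ∀ u v, H.Adj u v → (Θ v ≡ Θ u + 1 [ZMOD (M:ℤ)] ∨ Θ v + 1 ≡ Θ u [ZMOD (M:ℤ)])) :
    ∀ (n : ℕ) {a b : H.V}, H.walkLen n a b →
      ∃ f w : ℕ, f + w = n ∧ Θ b + (w:ℤ) ≡ Θ a + (f:ℤ) [ZMOD (M:ℤ)] := by
  intro n
  induction n with
  | zero =>
      intro a b h; cases h
      exact ⟨0, 0, rfl, Int.ModEq.refl _⟩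
  | succ m ih =>
      rintro a b ⟨u, hau, hub⟩
      obtain ⟨f, w, hfw, hmod⟩ := ih hub
      rcases hstep a u hau with hc | hc
      · refine ⟨f + 1, w, by omega, ?_⟩
        have : Θ u + (f:ℤ) ≡ (Θ a + 1) + (f:ℤ) [ZMOD (M:ℤ)] := hc.add_right _
        calc Θ b + (w:ℤ) ≡ Θ u + f [ZMOD (M:ℤ)] := hmod
          _ ≡ Θ a + 1 + f [ZMOD (M:ℤ)] := this
          _ = Θ a + ((f:ℕ)+1 : ℕ) := by push_cast; ring
      · refine ⟨f, w + 1, by omega, ?_⟩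
        have h1 : Θ b + ((w:ℕ)+1 : ℕ) = (Θ b + (w:ℤ)) + 1 := by push_cast; ring
        rw [h1]
        calc (Θ b + (w:ℤ)) + 1 ≡ (Θ u + f) + 1 [ZMOD (M:ℤ)] := hmod.add_right _
          _ = (Θ u + 1) + f := by ring
          _ ≡ Θ a + f [ZMOD (M:ℤ)] := hc.add_right _

theorem aux_extract (M : ℕ) (hModd : M % 2 = 1) {P Q : ℤ} {f w n : ℕ}
    (hfw : f + w = n) (hn : n % 2 = 1) (hnM : n < M)
    (hP : 0 ≤ P) (hP' : P < (M:ℤ)) (hQ : 0 ≤ Q) (hQ' : Q < (M:ℤ))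
    (hmod : 2*Q + (w:ℤ) ≡ 2*P + (f:ℤ) [ZMOD (M:ℤ)]) :
    ((M:ℤ) - n ≤ 2*(Q - P) ∧ 2*(Q - P) ≤ (M:ℤ) + n) ∨
      ((M:ℤ) - n ≤ 2*(P - Q) ∧ 2*(P - Q) ≤ (M:ℤ) + n) := by
  obtain ⟨k, hk⟩ := hmod.dvd
  have hMk : (M:ℤ) * k = 2*P + (f:ℤ) - 2*Q - (w:ℤ) := by linarith
  have hM0 : (0:ℤ) < M := by exact_mod_cast (Nat.pos_of_ne_zero (by omega))
  have hub : (M:ℤ) * k < M * 3 := by nlinarith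
  have hlb : (M:ℤ) * (-3) < M * k := by nlinarith
  have hk3 : k < 3 := lt_of_mul_lt_mul_left hub (le_of_lt hM0)
  have hk3' : -3 < k := lt_of_mul_lt_mul_left hlb (le_of_lt hM0)
  interval_cases k <;> omega

end Infra

section CircG

open PGraph

theorem aux_K2_walk : ∀ (n : ℕ) (a b : (circGraph 2 1).V),
    (circGraph 2 1).walkLen n a b → (a = b ↔ n % 2 = 0) := by
  intro n
  induction n with
  | zero =>
      intro a b h; cases h; simp
  | succ m ih =>
      rintro a b ⟨u, hadj, h⟩
      obtain ⟨h1, h2⟩ := hadj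
      have ha2 : (a : Fin 2).val < 2 := (a : Fin 2).isLt
      have hu2 : (u : Fin 2).val < 2 := (u : Fin 2).isLt
      have hb2 : (b : Fin 2).val < 2 := (b : Fin 2).isLt
      have hiu := ih u b h
      rcases abs_cases (((a : Fin 2).val : ℤ) - ((u : Fin 2).val : ℤ)) with ⟨he, _⟩ | ⟨he, _⟩ <;>
        rw [he] at h1 h2 <;>
        [skip; skip] <;>
        · have hsum : (a : Fin 2).val + (u : Fin 2).val = 1 := by omega
          constructor
          · intro hab
            subst hab
            have hne : ¬ (u = a) := by
              intro hh; rw [hh] at hsum; omega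
            have := (not_iff_not.mpr hiu).mp hne
            omega
          · intro hm
            have hub : ¬ (u = b) := by
              intro hh
              have := hiu.mp hh
              omega
            have hval : (u : Fin 2).val ≠ (b : Fin 2).val := fun hh => hub (Fin.ext hh)
            exact Fin.ext (by omega)

theorem aux_circ_reduce (M D : ℕ) (hD : 0 < D) (hDM : D ≤ M) :
    (circGraph M D).homTo (circGraph (M / Nat.gcd M D) (D / Nat.gcd M D)) := by
  set g := Nat.gcd M D with hg
  have hg0 : 0 < g := Nat.gcd_pos_of_pos_right _ hD
  have hgM : g ∣ M := Nat.gcd_dvd_left _ _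
  have hgD : g ∣ D := Nat.gcd_dvd_right _ _
  have hMg : (M / g) * g = M := Nat.div_mul_cancel hgM
  have hDg : (D / g) * g = D := Nat.div_mul_cancel hgD
  have key : ∀ x y : Fin M, ((D:ℤ) ≤ |((x.val:ℤ)) - (y.val:ℤ)|) →
      (|((x.val:ℤ)) - (y.val:ℤ)| ≤ (M:ℤ) - (D:ℤ)) → y.val ≤ x.val →
      ((D/g : ℕ):ℤ) ≤ ((x.val/g : ℕ):ℤ) - ((y.val/g : ℕ):ℤ) ∧
        ((x.val/g : ℕ):ℤ) - ((y.val/g : ℕ):ℤ) ≤ ((M/g : ℕ):ℤ) - ((D/g : ℕ):ℤ) := by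
    intro x y habs1 habs2 hle
    rw [abs_of_nonneg (by push_cast; omega : (0:ℤ) ≤ ((x.val:ℤ)) - (y.val:ℤ))] at habs1 habs2
    have hn1 : y.val + D ≤ x.val := by omega
    have hn2 : x.val ≤ y.val + (M - D) := by omega
    have e1 : y.val / g + D / g ≤ x.val / g := by
      have : (y.val + (D/g) * g) / g ≤ x.val / g := by
        apply Nat.div_le_div_right
        omega
      rwa [Nat.add_mul_div_right _ _ hg0] at this
    have e2 : x.val / g ≤ y.val / g + (M / g - D / g) := by
      have hsub : (M / g - D / g) * g = M - D := by
        rw [Nat.sub_mul, hMg, hDg]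
      have : x.val / g ≤ (y.val + (M/g - D/g) * g) / g := by
        apply Nat.div_le_div_right
        omega
      rwa [Nat.add_mul_div_right _ _ hg0] at this
    have hDMg : D / g ≤ M / g := Nat.div_le_div_right hDM
    have e1' : ((y.val/g : ℕ):ℤ) + ((D/g : ℕ):ℤ) ≤ ((x.val/g : ℕ):ℤ) := by exact_mod_cast e1
    have e2' : ((x.val/g : ℕ):ℤ) ≤ ((y.val/g : ℕ):ℤ) + (((M/g : ℕ):ℤ) - ((D/g : ℕ):ℤ)) := by
      have := (Nat.cast_sub hDMg : ((M/g - D/g : ℕ):ℤ) = ((M/g:ℕ):ℤ) - ((D/g:ℕ):ℤ))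
      rw [← this]
      exact_mod_cast e2
    constructor
    · linarith
    · linarith
  refine ⟨fun a => ⟨a.val / g, ?_⟩, ?_⟩
  · exact Nat.div_lt_div_of_lt_of_dvd hgM a.isLt
  · rintro u v ⟨h1, h2⟩
    show ((D/g:ℕ):ℤ) ≤ |((u.val/g:ℕ):ℤ) - ((v.val/g:ℕ):ℤ)| ∧
      |((u.val/g:ℕ):ℤ) - ((v.val/g:ℕ):ℤ)| ≤ ((M/g:ℕ):ℤ) - ((D/g:ℕ):ℤ)
    rcases le_total ((v : Fin M).val) ((u : Fin M).val) with hle | hle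
    · obtain ⟨e1, e2⟩ := key u v h1 h2 hle
      have hd : v.val / g ≤ u.val / g := Nat.div_le_div_right hle
      rw [abs_of_nonneg (by push_cast; omega)]
      exact ⟨e1, e2⟩
    · rw [abs_sub_comm] at h1 h2
      obtain ⟨e1, e2⟩ := key v u h1 h2 hle
      have hd : u.val / g ≤ v.val / g := Nat.div_le_div_right hle
      rw [abs_sub_comm, abs_of_nonneg (by push_cast; omega)]
      exact ⟨e1, e2⟩

end CircG

section Subdiv

open PGraph

theorem aux_gadget_walk (G : PGraph) (s : ℕ) {u v : G.V} (h : G.Adj u v) :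
    (G.subdiv s).walkLen (2*s+1) (Sum.inl u) (Sum.inl v) := by
  rcases Nat.eq_zero_or_pos s with hs | hs
  · subst hs
    exact ⟨Sum.inl v, ⟨rfl, h⟩, rfl⟩
  · set e : {p : G.V × G.V // G.Adj p.1 p.2} := ⟨(u,v), h⟩ with he
    set e' : {p : G.V × G.V // G.Adj p.1 p.2} := ⟨(v,u), G.symm u v h⟩ with he'
    have key : ∀ j : ℕ, ∀ hj : j < s, j ≤ s - 1 →
        (G.subdiv s).walkLen (2*j+2) (Sum.inl u) (Sum.inr (e, ⟨j, hj⟩)) := by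
      intro j
      induction j with
      | zero =>
          intro hj _
          refine ⟨Sum.inr (e', ⟨s-1, by omega⟩), ⟨rfl, show (s-1:ℕ) = s-1 from rfl⟩,
            Sum.inr (e, ⟨0, hj⟩), ?_, rfl⟩
          exact ⟨rfl, rfl, Or.inr (show (s-1) + 0 + 2 = s + 1 by omega)⟩
      | succ m ih =>
          intro hj hm
          have h1 := ih (by omega) (by omega)
          have step1 : (G.subdiv s).Adj (Sum.inr (e, ⟨m, by omega⟩))
              (Sum.inr (e', ⟨s-2-m, by omega⟩)) :=
            ⟨rfl, rfl, Or.inl (show m + (s-2-m) + 2 = s by omega)⟩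
          have step2 : (G.subdiv s).Adj (Sum.inr (e', ⟨s-2-m, by omega⟩))
              (Sum.inr (e, ⟨m+1, hj⟩)) :=
            ⟨rfl, rfl, Or.inr (show (s-2-m) + (m+1) + 2 = s + 1 by omega)⟩
          have w1 := (G.subdiv s).walkLen_concat _ _ _ _ h1 step1
          have w2 := (G.subdiv s).walkLen_concat _ _ _ _ w1 step2
          have : 2*(m+1)+2 = 2*m+2+1+1 := by omega
          rw [this]
          exact w2
    have hlast := key (s-1) (by omega) le_rfl
    have stepv : (G.subdiv s).Adj (Sum.inr (e, ⟨s-1, by omega⟩)) (Sum.inl v) :=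
      ⟨rfl, show (s-1:ℕ) = s-1 from rfl⟩
    have w := (G.subdiv s).walkLen_concat _ _ _ _ hlast stepv
    have : 2*s+1 = 2*(s-1)+2+1 := by omega
    rw [this]
    exact w

/-- Anchors of a vertex of the subdivision: a nearby `G`-vertex together with
the length of the path to it inside the gadget. -/
def aux_anch (G : PGraph) (s : ℕ) : (G.subdiv s).V → G.V → ℕ → Prop
  | Sum.inl u, a, p => a = u ∧ p = 0
  | Sum.inr (e, k), a, p =>
      (a = e.1.1 ∧ p = 2*(k:ℕ)+2) ∨ (a = e.1.2 ∧ p = 2*s - 2*(k:ℕ) - 1)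

theorem aux_A1 (G : PGraph) (s : ℕ) : ∀ (L : ℕ) (x y : (G.subdiv s).V),
    (G.subdiv s).walkLen L x y → ∀ b q, aux_anch G s y b q → ∀ a p, aux_anch G s x a p →
    ∃ n, G.walkLen n a b ∧ (2*s+1)*n ≤ L + p + q ∧ ((2*s+1)*n + p + q) % 2 = L % 2 := by
  intro L
  induction L with
  | zero =>
      intro x y hw b q hb a p ha
      cases hw
      rcases x with u | ⟨e, k⟩
      · obtain ⟨rfl, rfl⟩ := ha
        obtain ⟨rfl, rfl⟩ := hb
        exact ⟨0, rfl, by omega, by omega⟩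
      · have hk := k.isLt
        rcases ha with ⟨rfl, rfl⟩ | ⟨rfl, rfl⟩ <;> rcases hb with ⟨rfl, rfl⟩ | ⟨rfl, rfl⟩
        · exact ⟨0, rfl, by omega, by omega⟩
        · exact ⟨1, ⟨e.1.2, e.2, rfl⟩, by omega, by omega⟩
        · exact ⟨1, ⟨e.1.1, G.symm _ _ e.2, rfl⟩, by omega, by omega⟩
        · exact ⟨0, rfl, by omega, by omega⟩
  | succ L ih =>
      intro x y hw b q hb a p ha
      obtain ⟨w, hxw, hwy⟩ := hw
      rcases x with u | ⟨e, k⟩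
      · obtain ⟨rfl, rfl⟩ := ha
        rcases w with u' | ⟨e₂, l⟩
        · -- inl-inl edge: s = 0
          obtain ⟨hs0, hadj⟩ := hxw
          obtain ⟨n, hwalk, hbd, hpar⟩ := ih _ _ hwy b q hb u' 0 ⟨rfl, rfl⟩
          have hexp : (2*s+1)*(n+1) = (2*s+1)*n + 2*s + 1 := by ring
          exact ⟨n+1, ⟨u', hadj, hwalk⟩, by subst hs0; omega, by subst hs0; omega⟩
        · -- inl u to gadget (e₂, l) with u = e₂.1.2, l = s-1
          obtain ⟨hu, hl⟩ := hxw
          have hls := l.isLt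
          obtain ⟨n, hwalk, hbd, hpar⟩ := ih _ _ hwy b q hb e₂.1.2 (2*s - 2*(l:ℕ) - 1)
            (Or.inr ⟨rfl, rfl⟩)
          refine ⟨n, by rw [hu]; exact hwalk, by omega, by omega⟩
      · have hk := k.isLt
        rcases w with u' | ⟨e₂, l⟩
        · -- gadget to inl u' : u' = e.1.2, k = s-1
          obtain ⟨hu, hkk⟩ := hxw
          obtain ⟨n, hwalk, hbd, hpar⟩ := ih _ _ hwy b q hb u' 0 ⟨rfl, rfl⟩
          rcases ha with ⟨rfl, rfl⟩ | ⟨rfl, rfl⟩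
          · -- anchor at e.1.1 : prepend edge e.1.1 → e.1.2 = u'
            have hexp : (2*s+1)*(n+1) = (2*s+1)*n + 2*s + 1 := by ring
            refine ⟨n+1, ⟨u', by rw [hu]; exact e.2, hwalk⟩, by omega, by omega⟩
          · refine ⟨n, by rw [hu] at hwalk; exact hwalk, by omega, by omega⟩
        · -- gadget-gadget: e₂ is the reverse of e
          obtain ⟨h21, h22, hkl⟩ := hxw
          have hls := l.isLt
          rcases ha with ⟨rfl, rfl⟩ | ⟨rfl, rfl⟩
          · -- x-anchor at e.1.1 = e₂.1.2
            obtain ⟨n, hwalk, hbd, hpar⟩ := ih _ _ hwy b q hb e₂.1.2 (2*s - 2*(l:ℕ) - 1)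
              (Or.inr ⟨rfl, rfl⟩)
            refine ⟨n, by rw [← h22]; exact hwalk, by omega, by omega⟩
          · -- x-anchor at e.1.2 = e₂.1.1
            obtain ⟨n, hwalk, hbd, hpar⟩ := ih _ _ hwy b q hb e₂.1.1 (2*(l:ℕ)+2)
              (Or.inl ⟨rfl, rfl⟩)
            refine ⟨n, by rw [← h21]; exact hwalk, by omega, by omega⟩

theorem aux_A2 (G : PGraph) (s : ℕ) : ∀ (L : ℕ) (x y : (G.subdiv s).V),
    (G.subdiv s).walkLen L x y →
    (∃ (w : G.V) (L₁ L₂ : ℕ), L₁ + L₂ = L ∧ (G.subdiv s).walkLen L₁ x (Sum.inl w) ∧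
        (G.subdiv s).walkLen L₂ (Sum.inl w) y)
    ∨ (∃ e k e' k', x = Sum.inr (e, k) ∧ y = Sum.inr (e', k') ∧
        ((e.1 = e'.1 ∧ L % 2 = 0) ∨ ((e.1.1 = e'.1.2 ∧ e.1.2 = e'.1.1) ∧ L % 2 = 1))) := by
  intro L
  induction L with
  | zero =>
      intro x y hw
      cases hw
      rcases x with u | ⟨e, k⟩
      · exact Or.inl ⟨u, 0, 0, rfl, rfl, rfl⟩
      · exact Or.inr ⟨e, k, e, k, rfl, rfl, Or.inl ⟨rfl, rfl⟩⟩
  | succ L ih =>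
      intro x y hw
      obtain ⟨w, hxw, hwy⟩ := hw
      rcases x with u | ⟨e, k⟩
      · exact Or.inl ⟨u, 0, L+1, by omega, rfl, ⟨w, hxw, hwy⟩⟩
      · rcases w with u' | ⟨e₂, l⟩
        · exact Or.inl ⟨u', 1, L, by omega, ⟨Sum.inl u', hxw, rfl⟩, hwy⟩
        · obtain ⟨h21, h22, hkl⟩ := hxw
          rcases ih _ _ hwy with ⟨w', L₁, L₂, hL, hw1, hw2⟩ | ⟨e₃, k₃, e', k', hx3, hy3, hcase⟩
          · exact Or.inl ⟨w', L₁+1, L₂, by omega, ⟨Sum.inr (e₂, l), ⟨h21, h22, hkl⟩, hw1⟩, hw2⟩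
          · obtain ⟨he₃, hk₃⟩ : e₃ = e₂ ∧ k₃ = l := by
              have h1 := hx3
              injection h1 with h1'
              exact ⟨congrArg Prod.fst h1'.symm, congrArg Prod.snd h1'.symm⟩
            subst he₃
            rcases hcase with ⟨hpair, hpar⟩ | ⟨⟨hp1, hp2⟩, hpar⟩
            · refine Or.inr ⟨e, k, e', k', rfl, hy3, Or.inr ⟨⟨?_, ?_⟩, by omega⟩⟩
              · rw [← hpair]; exact h22.symm
              · rw [← hpair]; exact h21.symm
            · refine Or.inr ⟨e, k, e', k', rfl, hy3, Or.inl ⟨?_, by omega⟩⟩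
              have : e.1.1 = e'.1.1 := by rw [← hp2, h22]
              have h2 : e.1.2 = e'.1.2 := by rw [← hp1, h21]
              exact Prod.ext this h2

end Subdiv

section NoOdd

open PGraph

theorem aux_og_nat {G : PGraph} {r s : ℕ}
    (hog : G.ltOddGirth ((2*(r:ℚ)+1)/(2*(s:ℚ)+1)))
    {n : ℕ} (hodd : n % 2 = 1) (hw : ∃ v, G.walkLen n v v) : 2*r+1 < (2*s+1)*n := by
  have h := hog n (Nat.odd_iff.mpr hodd) hw
  have hpos : (0:ℚ) < 2*(s:ℚ)+1 := by positivity
  rw [div_lt_iff₀ hpos] at h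
  have : ((2*r+1 : ℕ) : ℚ) < (((2*s+1)*n : ℕ) : ℚ) := by push_cast; linarith
  exact_mod_cast this

theorem aux_A3 {G : PGraph} {r s : ℕ}
    (hog : G.ltOddGirth ((2*(r:ℚ)+1)/(2*(s:ℚ)+1))) (hrs : s < r) :
    ∀ x : (G.subdiv s).V, ¬ (G.subdiv s).walkLen (2*r+1) x x := by
  intro x h
  rcases aux_A2 G s _ x x h with ⟨w, L₁, L₂, hL, h1, h2⟩ | ⟨e, k, e', k', hx, hy, hc⟩
  · have hcl : (G.subdiv s).walkLen (L₂ + L₁) (Sum.inl w) (Sum.inl w) :=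
      aux_walk_trans _ _ h2 h1
    rw [(by omega : L₂ + L₁ = 2*r+1)] at hcl
    obtain ⟨n, hwalk, hbd, hpar⟩ := aux_A1 G s _ _ _ hcl w 0 ⟨rfl, rfl⟩ w 0 ⟨rfl, rfl⟩
    have hexp : (2*s+1)*n = 2*(s*n) + n := by ring
    have hodd : n % 2 = 1 := by omega
    have := aux_og_nat hog hodd ⟨w, hwalk⟩
    omega
  · have he : e = e' ∧ k = k' := by
      have h0 := hx.symm.trans hy
      injection h0 with h0'
      exact ⟨congrArg Prod.fst h0', congrArg Prod.snd h0'⟩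
    obtain ⟨rfl, rfl⟩ := he
    rcases hc with ⟨-, hpar⟩ | ⟨⟨hp1, -⟩, -⟩
    · omega
    · have hloop : G.Adj e.1.1 e.1.1 := by
        have := e.2
        rwa [← hp1] at this
      have := aux_og_nat hog (by omega : 1 % 2 = 1) ⟨e.1.1, e.1.1, hloop, rfl⟩
      omega

end NoOdd

section Profile

open PGraph

/-- Walk profile from `0` to `J` in `2s+1` steps of `±1`, oscillating in the middle. -/
def auxF (s J p : ℕ) : ℕ :=
  if p ≤ (J+1)/2 then p
  else if p ≤ 2*s+1 - (J-1)/2 then (J+1)/2 - (p - (J+1)/2) % 2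
  else J - (2*s+1 - p)

theorem auxF_zero (s J : ℕ) : auxF s J 0 = 0 := by
  unfold auxF; split_ifs <;> omega

theorem auxF_last (s J : ℕ) (hJ : J % 2 = 1) (hJs : J ≤ 2*s+1) : auxF s J (2*s+1) = J := by
  unfold auxF; split_ifs <;> omega

theorem auxF_step (s J p : ℕ) (hJ : J % 2 = 1) (hJs : J ≤ 2*s+1) (hp : p < 2*s+1) :
    auxF s J (p+1) = auxF s J p + 1 ∨ auxF s J p = auxF s J (p+1) + 1 := by
  unfold auxF; split_ifs <;> omega

theorem auxF_sym (s J p : ℕ) (hJ : J % 2 = 1) (hJs : J ≤ 2*s+1) (hp : p ≤ 2*s+1) :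
    auxF s J (2*s+1-p) + auxF s J p = J := by
  unfold auxF; split_ifs <;> omega

/-- Scaled rounding map. -/
def auxPsi (n m' : ℕ) (a : Fin n) : ℕ := a.val * m' / n

theorem auxPsi_bounds (n m' : ℕ) (hn : 0 < n) (a : Fin n) :
    n * auxPsi n m' a ≤ a.val * m' ∧ a.val * m' < n * auxPsi n m' a + n ∧
      auxPsi n m' a < m' ∨ (m' = 0 ∧ auxPsi n m' a = 0) := by
  rcases Nat.eq_zero_or_pos m' with hm | hm
  · right; simp [auxPsi, hm]
  · left
    refine ⟨?_, ?_, ?_⟩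
    · rw [mul_comm]
      exact Nat.div_mul_le_self _ _
    · unfold auxPsi
      have h1 := Nat.div_add_mod (a.val * m') n
      have h2 := Nat.mod_lt (a.val * m') hn
      linarith
    · unfold auxPsi
      rw [Nat.div_lt_iff_lt_mul hn]
      have := a.isLt
      nlinarith

attribute [irreducible] auxPsi

/-- The signed modular displacement of an ordered edge. -/
def auxJE (n m' : ℕ) (a b : Fin n) : ℤ :=
  2*((auxPsi n m' b : ℤ) - (auxPsi n m' a : ℤ)) - (if a.val < b.val then 1 else -1) * m'

theorem auxJE_antisym (n m' : ℕ) (a b : Fin n) (hab : a.val ≠ b.val) :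
    auxJE n m' b a = - auxJE n m' a b := by
  unfold auxJE
  rcases lt_or_gt_of_ne hab with h | h
  · rw [if_neg (show ¬ (b.val < a.val) by omega), if_pos h]; ring
  · rw [if_pos (show b.val < a.val from h), if_neg (show ¬ (a.val < b.val) by omega)]; ring

theorem auxJE_odd (n m' : ℕ) (hm' : m' % 2 = 1) (a b : Fin n) :
    (auxJE n m' a b) % 2 ≠ 0 := by
  unfold auxJE
  split_ifs <;> omega

set_option maxHeartbeats 1000000 in
theorem auxJE_bound (n m' s d : ℕ) (hn : 0 < n) (hm' : m' = 30*n+9) (hs : s = 5*n)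
    (hd : 0 < d) (h3d : n + 1 ≤ 3*d) (a b : Fin n)
    (h1 : (d:ℤ) ≤ |((a.val:ℤ)) - (b.val:ℤ)|) (h2 : |((a.val:ℤ)) - (b.val:ℤ)| ≤ (n:ℤ) - d) :
    (auxJE n m' a b).natAbs ≤ 2*s := by
  have hm'0 : 0 < m' := by omega
  obtain ⟨ha1, ha2, ha3⟩ | ⟨hh, -⟩ := auxPsi_bounds n m' hn a
  swap
  · omega
  obtain ⟨hb1, hb2, hb3⟩ | ⟨hh, -⟩ := auxPsi_bounds n m' hn b
  swap
  · omega
  -- cast everything to ℤ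
  have ha1' : (n:ℤ) * (auxPsi n m' a : ℤ) ≤ (a.val:ℤ) * m' := by exact_mod_cast ha1
  have ha2' : (a.val:ℤ) * m' < (n:ℤ) * (auxPsi n m' a : ℤ) + n := by exact_mod_cast ha2
  have hb1' : (n:ℤ) * (auxPsi n m' b : ℤ) ≤ (b.val:ℤ) * m' := by exact_mod_cast hb1
  have hb2' : (b.val:ℤ) * m' < (n:ℤ) * (auxPsi n m' b : ℤ) + n := by exact_mod_cast hb2
  have hd' : (1:ℤ) ≤ d := by exact_mod_cast hd
  have h3d' : (n:ℤ) + 1 ≤ 3*d := by exact_mod_cast h3d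
  have hn' : (1:ℤ) ≤ n := by exact_mod_cast hn
  have hms : (m':ℤ) = 30*(n:ℤ)+9 := by exact_mod_cast congrArg (Nat.cast : ℕ → ℤ) hm'
  have hss : (s:ℤ) = 5*(n:ℤ) := by exact_mod_cast congrArg (Nat.cast : ℕ → ℤ) hs
  -- enough: n * |jE| < n * (2s+1)
  have key : (n:ℤ) * (auxJE n m' a b) < n * (2*s+1) ∧
      -((n:ℤ) * (2*s+1)) < n * (auxJE n m' a b) := by
    unfold auxJE
    rcases abs_cases ((a.val:ℤ) - (b.val:ℤ)) with ⟨he, hpos2⟩ | ⟨he, hneg2⟩ <;>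
      rw [he] at h1 h2
    · -- a ≥ b : a.val > b.val is false-direction: a.val - b.val ≥ d ≥ 1 so ¬(a.val < b.val)
      rw [if_neg (by omega : ¬ (a.val < b.val))]
      constructor <;> nlinarith [mul_nonneg (by linarith : (0:ℤ) ≤ 3*(d:ℤ) - n - 1) (by linarith : (0:ℤ) ≤ (n:ℤ))]
    · rw [if_pos (by omega : a.val < b.val)]
      constructor <;> nlinarith [mul_nonneg (by linarith : (0:ℤ) ≤ 3*(d:ℤ) - n - 1) (by linarith : (0:ℤ) ≤ (n:ℤ))]
  have habs : (n:ℤ) * |auxJE n m' a b| < n * (2*s+1) := by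
    rcases abs_cases (auxJE n m' a b) with ⟨he, -⟩ | ⟨he, -⟩ <;> rw [he] <;> [exact key.1; linarith [key.2]]
  have h5 : |auxJE n m' a b| < (2*(s:ℤ)+1) := by
    by_contra hcon
    push_neg at hcon
    nlinarith
  have h6 : ((auxJE n m' a b).natAbs : ℤ) < 2*(s:ℤ)+1 := by rwa [Int.abs_eq_natAbs] at h5
  omega

end Profile

section EasyDir

open PGraph

theorem auxJE_def' (n m' : ℕ) (a b : Fin n) :
    2*((auxPsi n m' b : ℤ) - (auxPsi n m' a : ℤ)) - (if a.val < b.val then 1 else -1) * m'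
      = auxJE n m' a b := rfl

attribute [irreducible] auxJE

def auxSg (n m' : ℕ) (a b : Fin n) : ℤ := if 0 ≤ auxJE n m' a b then 1 else -1

def auxW (n m' s : ℕ) (a b : Fin n) (p : ℕ) : ℤ :=
  2 * (auxPsi n m' a : ℤ) + auxSg n m' a b * ((auxF s ((auxJE n m' a b).natAbs) p : ℕ) : ℤ)

theorem auxSg_mul (n m' : ℕ) (a b : Fin n) :
    auxSg n m' a b * ((auxJE n m' a b).natAbs : ℤ) = auxJE n m' a b := by
  unfold auxSg
  split_ifs with h
  · rw [one_mul, Int.natAbs_of_nonneg h]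
  · push_neg at h
    rw [Int.ofNat_natAbs_of_nonpos (le_of_lt h)]
    ring

theorem auxW_step (n m' s : ℕ) (a b : Fin n) (p : ℕ)
    (hJ : (auxJE n m' a b).natAbs % 2 = 1) (hJs : (auxJE n m' a b).natAbs ≤ 2*s+1)
    (hp : p < 2*s+1) :
    auxW n m' s a b (p+1) = auxW n m' s a b p + 1 ∨
      auxW n m' s a b p = auxW n m' s a b (p+1) + 1 := by
  rcases auxF_step s _ p hJ hJs hp with h | h
  · unfold auxW auxSg
    split_ifs with hsg
    · left; rw [h]; push_cast; ring
    · right; rw [h]; push_cast; ring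
  · unfold auxW auxSg
    split_ifs with hsg
    · right; rw [h]; push_cast; ring
    · left; rw [h]; push_cast; ring

theorem auxW_last (n m' s : ℕ) (a b : Fin n)
    (hJ : (auxJE n m' a b).natAbs % 2 = 1) (hJs : (auxJE n m' a b).natAbs ≤ 2*s+1) :
    auxW n m' s a b (2*s+1) ≡ 2 * (auxPsi n m' b : ℤ) [ZMOD (m' : ℤ)] := by
  unfold auxW
  rw [auxF_last s _ hJ hJs, auxSg_mul]
  have hdvd : (m':ℤ) ∣ (2 * (auxPsi n m' b : ℤ) - (2 * (auxPsi n m' a : ℤ) + auxJE n m' a b)) := by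
    rw [← auxJE_def']
    split_ifs
    · exact ⟨1, by ring⟩
    · exact ⟨-1, by ring⟩
  exact Int.modEq_iff_dvd.mpr hdvd

theorem auxW_sym (n m' s : ℕ) (a b : Fin n) (hab : a.val ≠ b.val)
    (hJ : (auxJE n m' a b).natAbs % 2 = 1) (hJs : (auxJE n m' a b).natAbs ≤ 2*s+1)
    (p : ℕ) (hp : p ≤ 2*s+1) :
    auxW n m' s b a p ≡ auxW n m' s a b (2*s+1-p) [ZMOD (m' : ℤ)] := by
  have hanti := auxJE_antisym n m' a b hab
  have hJne : auxJE n m' a b ≠ 0 := by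
    intro h
    rw [h] at hJ
    simp at hJ
  have hJeq : (auxJE n m' b a).natAbs = (auxJE n m' a b).natAbs := by
    rw [hanti, Int.natAbs_neg]
  have hsg : auxSg n m' b a = - auxSg n m' a b := by
    unfold auxSg
    rw [hanti]
    rcases lt_or_gt_of_ne hJne with h | h
    · rw [if_pos (by omega), if_neg (by omega)]; norm_num
    · rw [if_neg (by omega), if_pos (by omega)]
  have hFs := auxF_sym s _ p hJ hJs hp
  have key : auxW n m' s b a p - auxW n m' s a b (2*s+1-p)
      = (if a.val < b.val then (1:ℤ) else -1) * m' := by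
    unfold auxW
    rw [hsg, hJeq]
    have hcast : ((auxF s (auxJE n m' a b).natAbs (2*s+1-p) : ℕ) : ℤ)
        = ((auxJE n m' a b).natAbs : ℤ) - ((auxF s (auxJE n m' a b).natAbs p : ℕ) : ℤ) := by
      have h9 : auxF s (auxJE n m' a b).natAbs (2*s+1-p)
          = (auxJE n m' a b).natAbs - auxF s (auxJE n m' a b).natAbs p := by omega
      rw [h9]
      have h10 : auxF s (auxJE n m' a b).natAbs p ≤ (auxJE n m' a b).natAbs := by omega
      push_cast [h10]
      ring
    rw [hcast]
    have hj := auxSg_mul n m' a b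
    have hje := auxJE_def' n m' a b
    linear_combination hje - hj
  have hdvd : (m':ℤ) ∣ auxW n m' s a b (2*s+1-p) - auxW n m' s b a p := by
    rw [show auxW n m' s a b (2*s+1-p) - auxW n m' s b a p
        = -((if a.val < b.val then (1:ℤ) else -1) * m') by linarith [key]]
    split_ifs
    · exact ⟨-1, by ring⟩
    · exact ⟨1, by ring⟩
  exact Int.modEq_iff_dvd.mpr hdvd

end EasyDir

section EasyMain

open PGraph

def auxTheta (G : PGraph) (n m' s : ℕ) (f : G.V → Fin n) : (G.subdiv s).V → ℤ :=
  fun x => match x with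
  | Sum.inl u => 2 * (auxPsi n m' (f u) : ℤ)
  | Sum.inr (e, k) => auxW n m' s (f e.1.1) (f e.1.2) (2*(k:ℕ)+2)

theorem aux_pm (M : ℕ) {X Y W' : ℤ} (h : Y ≡ W' [ZMOD (M:ℤ)])
    (hstep : W' = X + 1 ∨ X = W' + 1) :
    Y ≡ X + 1 [ZMOD (M:ℤ)] ∨ Y + 1 ≡ X [ZMOD (M:ℤ)] := by
  rcases hstep with h1 | h1
  · left; rw [← h1]; exact h
  · right; rw [h1]; exact h.add_right 1

theorem aux_pm2 (M : ℕ) {X Y W1 : ℤ} (h : W1 ≡ X [ZMOD (M:ℤ)])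
    (hstep : W1 = Y + 1 ∨ Y = W1 + 1) :
    Y ≡ X + 1 [ZMOD (M:ℤ)] ∨ Y + 1 ≡ X [ZMOD (M:ℤ)] := by
  rcases hstep with h1 | h1
  · right; rw [← h1]; exact h
  · left; rw [h1]; exact h.add_right 1

theorem aux_edge_facts (G : PGraph) {n m' s d : ℕ} (hn : 0 < n) (hm' : m' = 30*n+9)
    (hs : s = 5*n) (hd : 0 < d) (h3d : n+1 ≤ 3*d) {f : G.V → Fin n}
    (hf : ∀ u v, G.Adj u v → (circGraph n d).Adj (f u) (f v))
    {u v : G.V} (h : G.Adj u v) :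
    (f u).val ≠ (f v).val ∧ (auxJE n m' (f u) (f v)).natAbs % 2 = 1 ∧
      (auxJE n m' (f u) (f v)).natAbs ≤ 2*s := by
  obtain ⟨h1, h2⟩ := hf u v h
  refine ⟨?_, ?_, auxJE_bound n m' s d hn hm' hs hd h3d (f u) (f v) h1 h2⟩
  · intro he
    rw [he] at h1
    simp at h1
    have : (0:ℤ) < d := by exact_mod_cast hd
    omega
  · have := auxJE_odd n m' (by omega) (f u) (f v)
    omega

theorem auxTheta_step (G : PGraph) {n m' s d : ℕ} (hn : 0 < n) (hm' : m' = 30*n+9)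
    (hs : s = 5*n) (hd : 0 < d) (h2d : 2*d+1 ≤ n) (h3d : n+1 ≤ 3*d) {f : G.V → Fin n}
    (hf : ∀ u v, G.Adj u v → (circGraph n d).Adj (f u) (f v)) :
    ∀ x y, (G.subdiv s).Adj x y →
      auxTheta G n m' s f y ≡ auxTheta G n m' s f x + 1 [ZMOD (m':ℤ)] ∨
      auxTheta G n m' s f y + 1 ≡ auxTheta G n m' s f x [ZMOD (m':ℤ)] := by
  have hs0 : 0 < s := by omega
  intro x y hxy
  rcases x with u | ⟨e, k⟩ <;> rcases y with u' | ⟨e', l⟩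
  · exact absurd hxy.1 (by omega)
  · -- x = inl u, y = inr (e', l) : u = e'.1.2, l = s-1
    obtain ⟨rfl, hl⟩ := hxy
    obtain ⟨hne, hodd, hble⟩ := aux_edge_facts G hn hm' hs hd h3d hf e'.2
    have hW' := auxW_last n m' s (f e'.1.1) (f e'.1.2) hodd (by omega)
    have hstepW := auxW_step n m' s (f e'.1.1) (f e'.1.2) (2*s) hodd (by omega) (by omega)
    have hTy : auxTheta G n m' s f (Sum.inr (e', l))
        = auxW n m' s (f e'.1.1) (f e'.1.2) (2*s) := by
      show auxW n m' s (f e'.1.1) (f e'.1.2) (2*(l:ℕ)+2) = _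
      rw [show 2*(l:ℕ)+2 = 2*s by omega]
    rw [hTy]
    exact aux_pm2 m' hW' (by rw [show 2*s+1 = 2*s+1 from rfl] at hstepW; exact hstepW)
  · -- x = inr (e,k), y = inl u' : u' = e.1.2, k = s-1
    obtain ⟨rfl, hk⟩ := hxy
    obtain ⟨hne, hodd, hble⟩ := aux_edge_facts G hn hm' hs hd h3d hf e.2
    have hW' := auxW_last n m' s (f e.1.1) (f e.1.2) hodd (by omega)
    have hstepW := auxW_step n m' s (f e.1.1) (f e.1.2) (2*s) hodd (by omega) (by omega)
    have hTx : auxTheta G n m' s f (Sum.inr (e, k))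
        = auxW n m' s (f e.1.1) (f e.1.2) (2*s) := by
      show auxW n m' s (f e.1.1) (f e.1.2) (2*(k:ℕ)+2) = _
      rw [show 2*(k:ℕ)+2 = 2*s by omega]
    rw [hTx]
    exact aux_pm m' hW'.symm hstepW
  · -- inner-inner
    obtain ⟨h21, h22, hkl⟩ := hxy
    obtain ⟨hne, hodd, hble⟩ := aux_edge_facts G hn hm' hs hd h3d hf e.2
    have hkk := k.isLt
    have hll := l.isLt
    have hsym := auxW_sym n m' s (f e.1.1) (f e.1.2) hne hodd (by omega)
      (2*(l:ℕ)+2) (by omega)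
    have hTy : auxTheta G n m' s f (Sum.inr (e', l))
        = auxW n m' s (f e.1.2) (f e.1.1) (2*(l:ℕ)+2) := by
      show auxW n m' s (f e'.1.1) (f e'.1.2) (2*(l:ℕ)+2) = _
      rw [h21, h22]
    rw [hTy]
    rcases hkl with hc | hc
    · have hq : 2*s+1 - (2*(l:ℕ)+2) = 2*(k:ℕ)+2+1 := by omega
      rw [hq] at hsym
      have hstepW := auxW_step n m' s (f e.1.1) (f e.1.2) (2*(k:ℕ)+2) hodd (by omega) (by omega)
      exact aux_pm m' hsym hstepW
    · have hq : 2*s+1 - (2*(l:ℕ)+2) = 2*(k:ℕ)+1 := by omega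
      rw [hq] at hsym
      have hstepW := auxW_step n m' s (f e.1.1) (f e.1.2) (2*(k:ℕ)+1) hodd (by omega) (by omega)
      have hstepW' : auxW n m' s (f e.1.1) (f e.1.2) (2*(k:ℕ)+1)
            = auxW n m' s (f e.1.1) (f e.1.2) (2*(k:ℕ)+2) + 1 ∨
          auxW n m' s (f e.1.1) (f e.1.2) (2*(k:ℕ)+2)
            = auxW n m' s (f e.1.1) (f e.1.2) (2*(k:ℕ)+1) + 1 := by
        rcases hstepW with h | h
        · right; rw [show 2*(k:ℕ)+2 = 2*(k:ℕ)+1+1 by omega]; exact h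
        · left; rw [show 2*(k:ℕ)+2 = 2*(k:ℕ)+1+1 by omega]; exact h
      exact aux_pm m' hsym hstepW'

theorem aux_easy (G : PGraph) {n d : ℕ} (hd : 0 < d) (h2d : 2*d + 1 ≤ n) (h3d : n + 1 ≤ 3*d)
    (f : G.V → Fin n) (hf : ∀ u v, G.Adj u v → (circGraph n d).Adj (f u) (f v)) :
    ((G.subdiv (5*n)).pow (2*(5*n+1)+1)).homTo (completeGraph 3) := by
  have hn : 0 < n := by omega
  set s := 5*n with hs
  set m' := 30*n+9 with hm'
  set t := 15*n+4 with ht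
  have hstep := auxTheta_step G hn hm' hs hd h2d h3d hf
  set Θ := auxTheta G n m' s f with hΘ
  set Λ : (G.subdiv s).V → ℤ := fun x => ((t:ℤ)+1) * Θ x % (m':ℤ) with hΛ
  have hm'pos : (0:ℤ) < m' := by exact_mod_cast (by omega : 0 < m')
  have hΛ0 : ∀ x, 0 ≤ Λ x := fun x => Int.emod_nonneg _ (by omega)
  have hΛlt : ∀ x, Λ x < m' := fun x => Int.emod_lt_of_pos _ hm'pos
  have h2Λ : ∀ x, 2 * Λ x ≡ Θ x [ZMOD (m':ℤ)] := by
    intro x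
    have h1 : Λ x ≡ ((t:ℤ)+1) * Θ x [ZMOD (m':ℤ)] := Int.emod_emod_of_dvd _ dvd_rfl
    calc 2 * Λ x ≡ 2*(((t:ℤ)+1) * Θ x) [ZMOD (m':ℤ)] := h1.mul_left 2
      _ = (m':ℤ) * Θ x + Θ x := by
          have : ((t:ℕ):ℤ) = 15*(n:ℤ)+4 := by exact_mod_cast congrArg (Nat.cast : ℕ → ℤ) ht
          have hmz : ((m':ℕ):ℤ) = 30*(n:ℤ)+9 := by exact_mod_cast congrArg (Nat.cast : ℕ → ℤ) hm'
          rw [this, hmz]; ring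
      _ ≡ 0 + Θ x [ZMOD (m':ℤ)] := Int.ModEq.add_right _ (Int.modEq_zero_iff_dvd.mpr ⟨Θ x, rfl⟩)
      _ = Θ x := by ring
  refine ⟨fun x => ⟨(Λ x).toNat / (2*(s+1)+1), ?_⟩, ?_⟩
  · have h1 := hΛlt x
    have h2 := hΛ0 x
    apply Nat.div_lt_of_lt_mul
    omega
  · rintro x y hxy
    intro hcc
    obtain ⟨fq, wq, hfw, hmod⟩ := aux_step_walk (G.subdiv s) m' Θ hstep _ hxy
    have hmod2 : 2 * (Λ y) + (wq:ℤ) ≡ 2 * (Λ x) + (fq:ℤ) [ZMOD (m':ℤ)] :=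
      ((h2Λ y).add_right _).trans (hmod.trans (((h2Λ x).symm).add_right _))
    have hext := aux_extract m' (by omega) hfw (by omega) (by omega : 2*(s+1)+1 < m')
      (hΛ0 x) (hΛlt x) (hΛ0 y) (hΛlt y) hmod2
    have hval : (Λ x).toNat / (2*(s+1)+1) = (Λ y).toNat / (2*(s+1)+1) := congrArg Fin.val hcc
    have d1 := Nat.div_add_mod (Λ x).toNat (2*(s+1)+1)
    have d2 := Nat.div_add_mod (Λ y).toNat (2*(s+1)+1)
    rw [← hval] at d2
    have m1 := Nat.mod_lt (Λ x).toNat (show 0 < 2*(s+1)+1 by omega)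
    have m2 := Nat.mod_lt (Λ y).toNat (show 0 < 2*(s+1)+1 by omega)
    have hc1 : ((Λ x).toNat : ℤ) = Λ x := Int.toNat_of_nonneg (hΛ0 x)
    have hc2 : ((Λ y).toNat : ℤ) = Λ y := Int.toNat_of_nonneg (hΛ0 y)
    have hclose : (Λ x).toNat + (2*(s+1)) ≥ (Λ y).toNat ∧
        (Λ y).toNat + (2*(s+1)) ≥ (Λ x).toNat := by
      constructor <;> omega
    rcases hext with ⟨he1, he2⟩ | ⟨he1, he2⟩
    · have : ((m':ℕ):ℤ) = 30*(n:ℤ)+9 := by exact_mod_cast congrArg (Nat.cast : ℕ → ℤ) hm'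
      omega
    · omega

end EasyMain

section HardSig

open PGraph

def nxc : Fin 3 → Fin 3 := fun γ => ⟨(γ.val + 1) % 3, by omega⟩

theorem nxc3 : ∀ γ : Fin 3, nxc (nxc (nxc γ)) = γ := by decide
theorem nxc_ne : ∀ γ : Fin 3, nxc γ ≠ γ := by decide
theorem nxc_ne2 : ∀ γ : Fin 3, nxc γ ≠ nxc (nxc γ) := by decide
theorem nxc_ne3 : ∀ γ : Fin 3, γ ≠ nxc (nxc γ) := by decide
theorem nxc_cases : ∀ γ δ : Fin 3, δ = γ ∨ δ = nxc γ ∨ δ = nxc (nxc γ) := by decide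

/-- The model signature sets: level sets of a vertex of `C_{6r+3}` at position
`(γ, x)` (block `γ`, offset `x ∈ [0,2r]`). -/
def auxM (r : ℕ) (γ : Fin 3) (x : ℕ) : ℕ → Set (Fin 3) := fun i =>
  {δ | if i % 2 = 0 then
    (δ = γ ∨ (δ = nxc (nxc γ) ∧ 2*x+2 ≤ i) ∨ (δ = nxc γ ∧ 4*r+2 ≤ 2*x+i))
  else
    ((δ = nxc γ ∧ 2*x+1 ≤ 2*r+i) ∨ (δ = nxc (nxc γ) ∧ 2*r+1 ≤ 2*x+i))}

/-- Signature of a vertex: colors seen at exact walk-distance `i`. -/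
def auxS (H : PGraph) (c : H.V → Fin 3) (v : H.V) (i : ℕ) : Set (Fin 3) :=
  {γ | ∃ y, c y = γ ∧ H.walkLen i y v}

theorem auxS_zero (H : PGraph) (c : H.V → Fin 3) (v : H.V) : auxS H c v 0 = {c v} := by
  ext γ
  constructor
  · rintro ⟨y, rfl, hy⟩
    cases hy; rfl
  · rintro rfl
    exact ⟨v, rfl, rfl⟩

theorem auxS_nonempty (H : PGraph) (c : H.V → Fin 3) (v : H.V) (hni : ∃ w, H.Adj v w) :
    ∀ i, (auxS H c v i).Nonempty := by
  have key : ∀ i, ∃ y, H.walkLen i y v := by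
    intro i
    induction i with
    | zero => exact ⟨v, rfl⟩
    | succ m ih =>
        obtain ⟨y, hy⟩ := ih
        rcases Nat.eq_zero_or_pos m with hm | hm
        · subst hm
          obtain ⟨w, hw⟩ := hni
          exact ⟨w, v, H.symm _ _ hw, rfl⟩
        · obtain ⟨w, hw⟩ := aux_walk_src H hy hm
          exact ⟨w, y, H.symm _ _ hw, hy⟩
  intro i
  obtain ⟨y, hy⟩ := key i
  exact ⟨c y, y, rfl, hy⟩

theorem auxS_chain (H : PGraph) (c : H.V → Fin 3) (v : H.V) (hni : ∃ w, H.Adj v w) (i : ℕ) :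
    auxS H c v i ⊆ auxS H c v (i+2) := by
  rintro γ ⟨y, rfl, hy⟩
  exact ⟨y, rfl, aux_walk_pad2 H hni hy⟩

theorem auxS_disj (H : PGraph) (c : H.V → Fin 3) {R : ℕ}
    (hc : ∀ x y, H.walkLen (2*R+1) x y → c x ≠ c y)
    (v : H.V) (hni : ∃ w, H.Adj v w) (i j : ℕ) (hij : i + j ≤ 2*R+1)
    (hpar : (i + j) % 2 = 1) :
    ∀ δ, δ ∈ auxS H c v i → δ ∉ auxS H c v j := by
  rintro δ ⟨y, rfl, hy⟩ ⟨y', hy'c, hy'⟩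
  -- walk y → v → y' of length i + j, pad to 2R+1
  have hw1 : H.walkLen (i + j) y y' := aux_walk_trans H i hy (H.walkLen_symm j y' v hy')
  have hy'ni : ∃ w, H.Adj y' w := by
    rcases Nat.eq_zero_or_pos j with hj | hj
    · subst hj; cases hy'; exact hni
    · exact aux_walk_src H hy' hj
  obtain ⟨e, he⟩ : ∃ e, (i+j) + 2*e = 2*R+1 := ⟨(2*R+1 - (i+j))/2, by omega⟩
  have := aux_walk_padEven H e hy'ni hw1
  rw [he] at this
  exact hc y y' this hy'c.symm

theorem auxS_cross_incl (H : PGraph) (c : H.V → Fin 3) {u v : H.V} (huv : H.Adj u v) (i : ℕ) :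
    auxS H c u i ⊆ auxS H c v (i+1) := by
  rintro γ ⟨y, rfl, hy⟩
  exact ⟨y, rfl, H.walkLen_concat i y u v hy huv⟩

theorem auxS_cross_disj (H : PGraph) (c : H.V → Fin 3) {R : ℕ}
    (hc : ∀ x y, H.walkLen (2*R+1) x y → c x ≠ c y)
    {u v : H.V} (huv : H.Adj u v) (i j : ℕ) (hij : i + j ≤ 2*R)
    (hpar : (i + j) % 2 = 0) :
    ∀ δ, δ ∈ auxS H c u i → δ ∉ auxS H c v j := by
  rintro δ ⟨y, rfl, hy⟩ ⟨y', hy'c, hy'⟩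
  have hw1 : H.walkLen (i + 1 + j) y y' := by
    have h1 : H.walkLen (i+1) y v := H.walkLen_concat i y u v hy huv
    exact aux_walk_trans H (i+1) h1 (H.walkLen_symm j y' v hy')
  have hy'ni : ∃ w, H.Adj y' w := by
    rcases Nat.eq_zero_or_pos j with hj | hj
    · subst hj; cases hy'; exact ⟨u, H.symm _ _ huv⟩
    · exact aux_walk_src H hy' hj
  obtain ⟨e, he⟩ : ∃ e, (i + 1 + j) + 2*e = 2*R+1 := ⟨(2*R+1 - (i+1+j))/2, by omega⟩
  have := aux_walk_padEven H e hy'ni hw1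
  rw [he] at this
  exact hc y y' this hy'c.symm

end HardSig

theorem auxM_mem_odd (r : ℕ) (γ : Fin 3) (x i : ℕ) (δ : Fin 3) (hi : i % 2 = 1) :
    δ ∈ auxM r γ x i ↔
      ((δ = nxc γ ∧ 2*x+1 ≤ 2*r+i) ∨ (δ = nxc (nxc γ) ∧ 2*r+1 ≤ 2*x+i)) := by
  unfold auxM
  rw [Set.mem_setOf_eq, if_neg (by omega : ¬ i % 2 = 0)]

theorem auxM_mem_even (r : ℕ) (γ : Fin 3) (x i : ℕ) (δ : Fin 3) (hi : i % 2 = 0) :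
    δ ∈ auxM r γ x i ↔
      (δ = γ ∨ (δ = nxc (nxc γ) ∧ 2*x+2 ≤ i) ∨ (δ = nxc γ ∧ 4*r+2 ≤ 2*x+i)) := by
  unfold auxM
  rw [Set.mem_setOf_eq, if_pos hi]

section Classify

open PGraph

open Classical in
theorem aux_classify (r : ℕ) (hr : 1 ≤ r) (A : ℕ → Set (Fin 3)) (γ : Fin 3)
    (h0 : A 0 = {γ})
    (hne : ∀ i, i ≤ r → (A i).Nonempty)
    (hchain : ∀ i, i + 2 ≤ r → A i ⊆ A (i+2))
    (hdisj : ∀ i j, i ≤ r → j ≤ r → (i + j) % 2 = 1 → ∀ δ, δ ∈ A i → δ ∉ A j) :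
    ∃ x, x ≤ 2*r ∧ ∀ i, i ≤ r → A i = auxM r γ x i := by
  have hchainE : ∀ (e i : ℕ), i + 2*e ≤ r → A i ⊆ A (i + 2*e) := by
    intro e
    induction e with
    | zero => intro i h; simp
    | succ m ih =>
        intro i h δ hδ
        have h1 := ih i (by omega)
        have h2 := hchain (i + 2*m) (by omega)
        have h3 := h2 (h1 hδ)
        rwa [show i + 2*(m+1) = i + 2*m + 2 by omega]
  have hchainE' : ∀ i j, i ≤ j → j ≤ r → i % 2 = j % 2 → A i ⊆ A j := by
    intro i j hij hjr hpar δ hδ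
    have := hchainE ((j-i)/2) i (by omega) hδ
    rwa [show i + 2*((j-i)/2) = j by omega] at this
  have hγ : ∀ i, i ≤ r → i % 2 = 0 → γ ∈ A i := by
    intro i hir hpar
    exact hchainE' 0 i (by omega) hir (by omega) (by rw [h0]; rfl)
  set eT := 2*(r/2) with heT_def
  set oT := 2*((r-1)/2)+1 with hoT_def
  have heT : eT ≤ r := by omega
  have hoT : oT ≤ r := by omega
  have hγodd : ∀ i, i ≤ r → i % 2 = 1 → γ ∉ A i := by
    intro i hir hpar
    exact hdisj 0 i (by omega) hir (by omega) γ (by rw [h0]; rfl)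
  -- test membership of the two other colors at the tops
  by_cases h2a : nxc (nxc γ) ∈ A eT
  · -- even jump gaining γ+2 ; odd sets are {nxc γ}
    have h2a1 : nxc γ ∉ A eT := by
      intro hcon
      obtain ⟨w, hw⟩ := hne oT hoT
      rcases nxc_cases γ w with rfl | rfl | rfl
      · exact hγodd oT hoT (by omega) hw
      · exact hdisj eT oT heT hoT (by omega) (nxc γ) hcon hw
      · exact hdisj eT oT heT hoT (by omega) (nxc (nxc γ)) h2a hw
    have hodd_eq : ∀ k, 2*k+1 ≤ r → A (2*k+1) = {nxc γ} := by
      intro k hk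
      have hsub : ∀ δ, δ ∈ A (2*k+1) → δ = nxc γ := by
        intro δ hδ
        rcases nxc_cases γ δ with rfl | rfl | rfl
        · exact absurd hδ (hγodd _ hk (by omega))
        · rfl
        · exfalso
          have : nxc (nxc γ) ∈ A oT := hchainE' (2*k+1) oT (by omega) hoT (by omega) hδ
          exact hdisj eT oT heT hoT (by omega) _ h2a this
      obtain ⟨w, hw⟩ := hne (2*k+1) hk
      have hwn := hsub w hw
      subst hwn
      ext δ
      exact ⟨fun h => hsub δ h, fun h => by rw [Set.mem_singleton_iff] at h; rwa [h]⟩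
    have hex : ∃ j, 2*j ≤ r ∧ nxc (nxc γ) ∈ A (2*j) := ⟨r/2, by omega, h2a⟩
    obtain ⟨hj1, hj2⟩ := Nat.find_spec hex
    set j₀ := Nat.find hex with hj₀def
    have hj₀pos : 1 ≤ j₀ := by
      rcases Nat.eq_zero_or_pos j₀ with h | h
      · exfalso
        have := hj2
        rw [h] at this
        simp only [Nat.mul_zero] at this
        rw [h0] at this
        exact nxc_ne3 γ (by rw [Set.mem_singleton_iff] at this; exact this.symm)
      · exact h
    have hev1 : ∀ j, 2*j ≤ r → j < j₀ → A (2*j) = {γ} := by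
      intro j hjr hjj
      ext δ
      simp only [Set.mem_singleton_iff]
      constructor
      · intro hδ
        rcases nxc_cases γ δ with rfl | rfl | rfl
        · rfl
        · exact absurd (hchainE' (2*j) eT (by omega) heT (by omega) hδ) h2a1
        · exact absurd ⟨hjr, hδ⟩ (Nat.find_min hex hjj)
      · rintro rfl
        exact hγ _ hjr (by omega)
    have hev2 : ∀ j, 2*j ≤ r → j₀ ≤ j → ∀ δ, δ ∈ A (2*j) ↔ (δ = γ ∨ δ = nxc (nxc γ)) := by
      intro j hjr hjj δ
      constructor
      · intro hδ
        rcases nxc_cases γ δ with rfl | rfl | rfl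
        · exact Or.inl rfl
        · exact absurd (hchainE' (2*j) eT (by omega) heT (by omega) hδ) h2a1
        · exact Or.inr rfl
      · rintro (rfl | rfl)
        · exact hγ _ hjr (by omega)
        · exact hchainE' (2*j₀) (2*j) (by omega) hjr (by omega) hj2
    refine ⟨j₀ - 1, by omega, ?_⟩
    intro i hir
    rcases Nat.even_or_odd i with hpar | hpar
    · have hpar' : i % 2 = 0 := Nat.even_iff.mp hpar
      ext δ
      simp only [auxM, Set.mem_setOf_eq, if_pos hpar']
      rw [show i = 2*(i/2) by omega] at hir ⊢
      by_cases hji : i/2 < j₀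
      · rw [hev1 (i/2) (by omega) hji]
        simp only [Set.mem_singleton_iff]
        constructor
        · rintro rfl; exact Or.inl rfl
        · rintro (rfl | ⟨rfl, hc⟩ | ⟨rfl, hc⟩)
          · rfl
          · omega
          · omega
      · constructor
        · intro hδ
          rcases (hev2 (i/2) (by omega) (by omega) δ).mp hδ with rfl | rfl
          · exact Or.inl rfl
          · exact Or.inr (Or.inl ⟨rfl, by omega⟩)
        · rintro (rfl | ⟨rfl, hc⟩ | ⟨rfl, hc⟩)
          · exact (hev2 (i/2) (by omega) (by omega) δ).mpr (Or.inl rfl)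
          · exact (hev2 (i/2) (by omega) (by omega) _).mpr (Or.inr rfl)
          · omega
    · have hpar' : i % 2 = 1 := Nat.odd_iff.mp hpar
      ext δ
      simp only [auxM, Set.mem_setOf_eq, if_neg (by omega : ¬ i % 2 = 0)]
      rw [show i = 2*((i-1)/2)+1 by omega] at hir ⊢
      rw [hodd_eq ((i-1)/2) hir]
      simp only [Set.mem_singleton_iff]
      constructor
      · rintro rfl
        exact Or.inl ⟨rfl, by omega⟩
      · rintro (⟨rfl, hc⟩ | ⟨rfl, hc⟩)
        · rfl
        · omega
  · by_cases h2b : nxc γ ∈ A eT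
    · -- even jump gaining γ+1 ; odd sets are {nxc (nxc γ)}
      have hodd_eq : ∀ k, 2*k+1 ≤ r → A (2*k+1) = {nxc (nxc γ)} := by
        intro k hk
        have hsub : ∀ δ, δ ∈ A (2*k+1) → δ = nxc (nxc γ) := by
          intro δ hδ
          rcases nxc_cases γ δ with rfl | rfl | rfl
          · exact absurd hδ (hγodd _ hk (by omega))
          · exfalso
            have : nxc γ ∈ A oT := hchainE' (2*k+1) oT (by omega) hoT (by omega) hδ
            exact hdisj eT oT heT hoT (by omega) _ h2b this
          · rfl
        obtain ⟨w, hw⟩ := hne (2*k+1) hk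
        have hwn := hsub w hw
        subst hwn
        ext δ
        exact ⟨fun h => hsub δ h, fun h => by rw [Set.mem_singleton_iff] at h; rwa [h]⟩
      have hex : ∃ j, 2*j ≤ r ∧ nxc γ ∈ A (2*j) := ⟨r/2, by omega, h2b⟩
      obtain ⟨hj1, hj2⟩ := Nat.find_spec hex
      set j₀ := Nat.find hex with hj₀def
      have hj₀pos : 1 ≤ j₀ := by
        rcases Nat.eq_zero_or_pos j₀ with h | h
        · exfalso
          have := hj2
          rw [h] at this
          simp only [Nat.mul_zero] at this
          rw [h0] at this
          exact nxc_ne γ (by rw [Set.mem_singleton_iff] at this; exact this)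
        · exact h
      have hev1 : ∀ j, 2*j ≤ r → j < j₀ → A (2*j) = {γ} := by
        intro j hjr hjj
        ext δ
        simp only [Set.mem_singleton_iff]
        constructor
        · intro hδ
          rcases nxc_cases γ δ with rfl | rfl | rfl
          · rfl
          · exact absurd ⟨hjr, hδ⟩ (Nat.find_min hex hjj)
          · exact absurd (hchainE' (2*j) eT (by omega) heT (by omega) hδ) h2a
        · rintro rfl
          exact hγ _ hjr (by omega)
      have hev2 : ∀ j, 2*j ≤ r → j₀ ≤ j → ∀ δ, δ ∈ A (2*j) ↔ (δ = γ ∨ δ = nxc γ) := by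
        intro j hjr hjj δ
        constructor
        · intro hδ
          rcases nxc_cases γ δ with rfl | rfl | rfl
          · exact Or.inl rfl
          · exact Or.inr rfl
          · exact absurd (hchainE' (2*j) eT (by omega) heT (by omega) hδ) h2a
        · rintro (rfl | rfl)
          · exact hγ _ hjr (by omega)
          · exact hchainE' (2*j₀) (2*j) (by omega) hjr (by omega) hj2
      refine ⟨2*r+1 - j₀, by omega, ?_⟩
      intro i hir
      rcases Nat.even_or_odd i with hpar | hpar
      · have hpar' : i % 2 = 0 := Nat.even_iff.mp hpar
        ext δ
        simp only [auxM, Set.mem_setOf_eq, if_pos hpar']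
        by_cases hji : i/2 < j₀
        · rw [show i = 2*(i/2) by omega] at hir ⊢
          rw [hev1 (i/2) (by omega) hji]
          simp only [Set.mem_singleton_iff]
          constructor
          · rintro rfl; exact Or.inl rfl
          · rintro (rfl | ⟨rfl, hc⟩ | ⟨rfl, hc⟩)
            · rfl
            · omega
            · omega
        · rw [show i = 2*(i/2) by omega] at hir ⊢
          constructor
          · intro hδ
            rcases (hev2 (i/2) (by omega) (by omega) δ).mp hδ with rfl | rfl
            · exact Or.inl rfl
            · exact Or.inr (Or.inr ⟨rfl, by omega⟩)
          · rintro (rfl | ⟨rfl, hc⟩ | ⟨rfl, hc⟩)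
            · exact (hev2 (i/2) (by omega) (by omega) δ).mpr (Or.inl rfl)
            · omega
            · exact (hev2 (i/2) (by omega) (by omega) _).mpr (Or.inr rfl)
      · have hpar' : i % 2 = 1 := Nat.odd_iff.mp hpar
        ext δ
        simp only [auxM, Set.mem_setOf_eq, if_neg (by omega : ¬ i % 2 = 0)]
        rw [show i = 2*((i-1)/2)+1 by omega] at hir ⊢
        rw [hodd_eq ((i-1)/2) hir]
        simp only [Set.mem_singleton_iff]
        constructor
        · rintro rfl
          exact Or.inr ⟨rfl, by omega⟩
        · rintro (⟨rfl, hc⟩ | ⟨rfl, hc⟩)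
          · omega
          · rfl
    · -- no even jump: all even sets are {γ}
      have hev_all : ∀ j, 2*j ≤ r → A (2*j) = {γ} := by
        intro j hjr
        ext δ
        simp only [Set.mem_singleton_iff]
        constructor
        · intro hδ
          rcases nxc_cases γ δ with rfl | rfl | rfl
          · rfl
          · exact absurd (hchainE' (2*j) eT (by omega) heT (by omega) hδ) h2b
          · exact absurd (hchainE' (2*j) eT (by omega) heT (by omega) hδ) h2a
        · rintro rfl
          exact hγ _ hjr (by omega)
      by_cases hbb : nxc γ ∈ A oT ∧ nxc (nxc γ) ∈ A oT
      · -- odd jump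
        have hex : ∃ k, 2*k+1 ≤ r ∧ nxc γ ∈ A (2*k+1) ∧ nxc (nxc γ) ∈ A (2*k+1) :=
          ⟨(r-1)/2, by omega, hbb.1, hbb.2⟩
        obtain ⟨hk1, hk2, hk3⟩ := Nat.find_spec hex
        set k₀ := Nat.find hex with hk₀def
        have hpost : ∀ k, 2*k+1 ≤ r → k₀ ≤ k →
            ∀ δ, δ ∈ A (2*k+1) ↔ (δ = nxc γ ∨ δ = nxc (nxc γ)) := by
          intro k hkr hkk δ
          constructor
          · intro hδ
            rcases nxc_cases γ δ with rfl | rfl | rfl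
            · exact absurd hδ (hγodd _ hkr (by omega))
            · exact Or.inl rfl
            · exact Or.inr rfl
          · rintro (rfl | rfl)
            · exact hchainE' (2*k₀+1) (2*k+1) (by omega) hkr (by omega) hk2
            · exact hchainE' (2*k₀+1) (2*k+1) (by omega) hkr (by omega) hk3
        rcases Nat.eq_zero_or_pos k₀ with hk₀0 | hk₀pos
        · -- jump at level 1: x = r
          refine ⟨r, by omega, ?_⟩
          intro i hir
          rcases Nat.even_or_odd i with hpar | hpar
          · have hpar' : i % 2 = 0 := Nat.even_iff.mp hpar
            ext δ
            simp only [auxM, Set.mem_setOf_eq, if_pos hpar']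
            rw [show i = 2*(i/2) by omega] at hir ⊢
            rw [hev_all (i/2) (by omega)]
            simp only [Set.mem_singleton_iff]
            constructor
            · rintro rfl; exact Or.inl rfl
            · rintro (rfl | ⟨rfl, hc⟩ | ⟨rfl, hc⟩)
              · rfl
              · omega
              · omega
          · have hpar' : i % 2 = 1 := Nat.odd_iff.mp hpar
            ext δ
            simp only [auxM, Set.mem_setOf_eq, if_neg (by omega : ¬ i % 2 = 0)]
            rw [show i = 2*((i-1)/2)+1 by omega] at hir ⊢
            constructor
            · intro hδ
              rcases (hpost ((i-1)/2) hir (by omega) δ).mp hδ with rfl | rfl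
              · exact Or.inl ⟨rfl, by omega⟩
              · exact Or.inr ⟨rfl, by omega⟩
            · rintro (⟨rfl, hc⟩ | ⟨rfl, hc⟩)
              · exact (hpost ((i-1)/2) hir (by omega) _).mpr (Or.inl rfl)
              · exact (hpost ((i-1)/2) hir (by omega) _).mpr (Or.inr rfl)
        · -- k₀ ≥ 1 : look at A 1
          have hA1 : (A 1).Nonempty := hne 1 hr
          have hpre : ∀ k, k < k₀ → 2*k+1 ≤ r → ∀ δ, δ ∈ A 1 → (δ ∈ A (2*k+1) ∧
              ¬ (nxc γ ∈ A (2*k+1) ∧ nxc (nxc γ) ∈ A (2*k+1))) := by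
            intro k hkk hkr δ hδ
            refine ⟨hchainE' 1 (2*k+1) (by omega) hkr (by omega) hδ, ?_⟩
            intro ⟨hc1, hc2⟩
            exact Nat.find_min hex hkk ⟨hkr, hc1, hc2⟩
          by_cases hy : nxc γ ∈ A 1
          · -- pre-jump odd sets are {nxc γ}; x = r - k₀
            have hodd1 : ∀ k, k < k₀ → 2*k+1 ≤ r → A (2*k+1) = {nxc γ} := by
              intro k hkk hkr
              obtain ⟨hin, hnboth⟩ := hpre k hkk hkr (nxc γ) hy
              ext δ
              simp only [Set.mem_singleton_iff]
              constructor
              · intro hδ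
                rcases nxc_cases γ δ with rfl | rfl | rfl
                · exact absurd hδ (hγodd _ hkr (by omega))
                · rfl
                · exact absurd ⟨hin, hδ⟩ hnboth
              · rintro rfl; exact hin
            refine ⟨r - k₀, by omega, ?_⟩
            intro i hir
            rcases Nat.even_or_odd i with hpar | hpar
            · have hpar' : i % 2 = 0 := Nat.even_iff.mp hpar
              ext δ
              simp only [auxM, Set.mem_setOf_eq, if_pos hpar']
              rw [show i = 2*(i/2) by omega] at hir ⊢
              rw [hev_all (i/2) (by omega)]
              simp only [Set.mem_singleton_iff]
              constructor
              · rintro rfl; exact Or.inl rfl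
              · rintro (rfl | ⟨rfl, hc⟩ | ⟨rfl, hc⟩)
                · rfl
                · omega
                · omega
            · have hpar' : i % 2 = 1 := Nat.odd_iff.mp hpar
              ext δ
              simp only [auxM, Set.mem_setOf_eq, if_neg (by omega : ¬ i % 2 = 0)]
              rw [show i = 2*((i-1)/2)+1 by omega] at hir ⊢
              by_cases hki : (i-1)/2 < k₀
              · rw [hodd1 ((i-1)/2) hki hir]
                simp only [Set.mem_singleton_iff]
                constructor
                · rintro rfl
                  exact Or.inl ⟨rfl, by omega⟩
                · rintro (⟨rfl, hc⟩ | ⟨rfl, hc⟩)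
                  · rfl
                  · exfalso
                    have : k₀ ≤ (i-1)/2 := by omega
                    omega
              · constructor
                · intro hδ
                  rcases (hpost ((i-1)/2) hir (by omega) δ).mp hδ with rfl | rfl
                  · exact Or.inl ⟨rfl, by omega⟩
                  · exact Or.inr ⟨rfl, by omega⟩
                · rintro (⟨rfl, hc⟩ | ⟨rfl, hc⟩)
                  · exact (hpost ((i-1)/2) hir (by omega) _).mpr (Or.inl rfl)
                  · exact (hpost ((i-1)/2) hir (by omega) _).mpr (Or.inr rfl)
          · -- A 1 = {nxc (nxc γ)}; x = r + k₀
            have hy2 : nxc (nxc γ) ∈ A 1 := by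
              obtain ⟨w, hw⟩ := hA1
              rcases nxc_cases γ w with rfl | rfl | rfl
              · exact absurd hw (hγodd 1 hr (by omega))
              · exact absurd hw hy
              · exact hw
            have hodd1 : ∀ k, k < k₀ → 2*k+1 ≤ r → A (2*k+1) = {nxc (nxc γ)} := by
              intro k hkk hkr
              obtain ⟨hin, hnboth⟩ := hpre k hkk hkr (nxc (nxc γ)) hy2
              ext δ
              simp only [Set.mem_singleton_iff]
              constructor
              · intro hδ
                rcases nxc_cases γ δ with rfl | rfl | rfl
                · exact absurd hδ (hγodd _ hkr (by omega))
                · exact absurd ⟨hδ, hin⟩ hnboth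
                · rfl
              · rintro rfl; exact hin
            refine ⟨r + k₀, by omega, ?_⟩
            intro i hir
            rcases Nat.even_or_odd i with hpar | hpar
            · have hpar' : i % 2 = 0 := Nat.even_iff.mp hpar
              ext δ
              simp only [auxM, Set.mem_setOf_eq, if_pos hpar']
              rw [show i = 2*(i/2) by omega] at hir ⊢
              rw [hev_all (i/2) (by omega)]
              simp only [Set.mem_singleton_iff]
              constructor
              · rintro rfl; exact Or.inl rfl
              · rintro (rfl | ⟨rfl, hc⟩ | ⟨rfl, hc⟩)
                · rfl
                · omega
                · omega
            · have hpar' : i % 2 = 1 := Nat.odd_iff.mp hpar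
              ext δ
              simp only [auxM, Set.mem_setOf_eq, if_neg (by omega : ¬ i % 2 = 0)]
              rw [show i = 2*((i-1)/2)+1 by omega] at hir ⊢
              by_cases hki : (i-1)/2 < k₀
              · rw [hodd1 ((i-1)/2) hki hir]
                simp only [Set.mem_singleton_iff]
                constructor
                · rintro rfl
                  exact Or.inr ⟨rfl, by omega⟩
                · rintro (⟨rfl, hc⟩ | ⟨rfl, hc⟩)
                  · omega
                  · rfl
              · constructor
                · intro hδ
                  rcases (hpost ((i-1)/2) hir (by omega) δ).mp hδ with rfl | rfl
                  · exact Or.inl ⟨rfl, by omega⟩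
                  · exact Or.inr ⟨rfl, by omega⟩
                · rintro (⟨rfl, hc⟩ | ⟨rfl, hc⟩)
                  · exact (hpost ((i-1)/2) hir (by omega) _).mpr (Or.inl rfl)
                  · exact (hpost ((i-1)/2) hir (by omega) _).mpr (Or.inr rfl)
      · -- lazy case
        have hoddsub : ∀ k, 2*k+1 ≤ r → ∀ δ, δ ∈ A (2*k+1) → δ ∈ A oT := by
          intro k hkr δ hδ
          exact hchainE' (2*k+1) oT (by omega) hoT (by omega) hδ
        by_cases hw : nxc γ ∈ A oT
        · have hw2 : nxc (nxc γ) ∉ A oT := fun hc => hbb ⟨hw, hc⟩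
          have hodd1 : ∀ k, 2*k+1 ≤ r → A (2*k+1) = {nxc γ} := by
            intro k hkr
            ext δ
            simp only [Set.mem_singleton_iff]
            constructor
            · intro hδ
              rcases nxc_cases γ δ with rfl | rfl | rfl
              · exact absurd hδ (hγodd _ hkr (by omega))
              · rfl
              · exact absurd (hoddsub k hkr _ hδ) hw2
            · rintro rfl
              obtain ⟨w', hw'⟩ := hne (2*k+1) hkr
              rcases nxc_cases γ w' with rfl | rfl | rfl
              · exact absurd hw' (hγodd _ hkr (by omega))
              · exact hw'
              · exact absurd (hoddsub k hkr _ hw') hw2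
          refine ⟨r/2, by omega, ?_⟩
          intro i hir
          rcases Nat.even_or_odd i with hpar | hpar
          · have hpar' : i % 2 = 0 := Nat.even_iff.mp hpar
            ext δ
            simp only [auxM, Set.mem_setOf_eq, if_pos hpar']
            rw [show i = 2*(i/2) by omega] at hir ⊢
            rw [hev_all (i/2) (by omega)]
            simp only [Set.mem_singleton_iff]
            constructor
            · rintro rfl; exact Or.inl rfl
            · rintro (rfl | ⟨rfl, hc⟩ | ⟨rfl, hc⟩)
              · rfl
              · omega
              · omega
          · have hpar' : i % 2 = 1 := Nat.odd_iff.mp hpar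
            ext δ
            simp only [auxM, Set.mem_setOf_eq, if_neg (by omega : ¬ i % 2 = 0)]
            rw [show i = 2*((i-1)/2)+1 by omega] at hir ⊢
            rw [hodd1 ((i-1)/2) hir]
            simp only [Set.mem_singleton_iff]
            constructor
            · rintro rfl
              exact Or.inl ⟨rfl, by omega⟩
            · rintro (⟨rfl, hc⟩ | ⟨rfl, hc⟩)
              · rfl
              · omega
        · have hw1 : nxc (nxc γ) ∈ A oT := by
            obtain ⟨w', hw'⟩ := hne oT hoT
            rcases nxc_cases γ w' with rfl | rfl | rfl
            · exact absurd hw' (hγodd _ hoT (by omega))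
            · exact absurd hw' hw
            · exact hw'
          have hodd1 : ∀ k, 2*k+1 ≤ r → A (2*k+1) = {nxc (nxc γ)} := by
            intro k hkr
            ext δ
            simp only [Set.mem_singleton_iff]
            constructor
            · intro hδ
              rcases nxc_cases γ δ with rfl | rfl | rfl
              · exact absurd hδ (hγodd _ hkr (by omega))
              · exact absurd (hoddsub k hkr _ hδ) hw
              · rfl
            · rintro rfl
              obtain ⟨w', hw'⟩ := hne (2*k+1) hkr
              rcases nxc_cases γ w' with rfl | rfl | rfl
              · exact absurd hw' (hγodd _ hkr (by omega))
              · exact absurd (hoddsub k hkr _ hw') hw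
              · exact hw'
          refine ⟨2*r - r/2, by omega, ?_⟩
          intro i hir
          rcases Nat.even_or_odd i with hpar | hpar
          · have hpar' : i % 2 = 0 := Nat.even_iff.mp hpar
            ext δ
            simp only [auxM, Set.mem_setOf_eq, if_pos hpar']
            rw [show i = 2*(i/2) by omega] at hir ⊢
            rw [hev_all (i/2) (by omega)]
            simp only [Set.mem_singleton_iff]
            constructor
            · rintro rfl; exact Or.inl rfl
            · rintro (rfl | ⟨rfl, hc⟩ | ⟨rfl, hc⟩)
              · rfl
              · omega
              · omega
          · have hpar' : i % 2 = 1 := Nat.odd_iff.mp hpar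
            ext δ
            simp only [auxM, Set.mem_setOf_eq, if_neg (by omega : ¬ i % 2 = 0)]
            rw [show i = 2*((i-1)/2)+1 by omega] at hir ⊢
            rw [hodd1 ((i-1)/2) hir]
            simp only [Set.mem_singleton_iff]
            constructor
            · rintro rfl
              exact Or.inr ⟨rfl, by omega⟩
            · rintro (⟨rfl, hc⟩ | ⟨rfl, hc⟩)
              · omega
              · rfl

end Classify

section Core

open PGraph

theorem aux_core (r : ℕ) (hr : 1 ≤ r) (γ : Fin 3) (x x' : ℕ) (hx2 : x ≤ 2*r) (hx'2 : x' ≤ 2*r)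
    (hb1 : (nxc γ) ∈ auxM r γ x 1)
    (hb2 : γ ∈ auxM r (nxc γ) x' 1)
    (hincl1 : ∀ i, i + 1 ≤ r → ∀ δ, δ ∈ auxM r γ x i → δ ∈ auxM r (nxc γ) x' (i+1))
    (hincl2 : ∀ i, i + 1 ≤ r → ∀ δ, δ ∈ auxM r (nxc γ) x' i → δ ∈ auxM r γ x (i+1))
    (hdisj : ∀ i, i ≤ r → ∀ δ, δ ∈ auxM r γ x i → δ ∉ auxM r (nxc γ) x' i) :
    x ≤ r ∧ r ≤ x' ∧ x + r ≤ x' ∧ x' ≤ x + r + 1 := by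
  have hng : nxc (nxc (nxc γ)) = γ := nxc3 γ
  have hx_r : x ≤ r := by
    rw [auxM_mem_odd r γ x 1 _ (by omega)] at hb1
    rcases hb1 with ⟨-, hc⟩ | ⟨he, -⟩
    · omega
    · exact absurd he (nxc_ne2 γ)
  have hr_x' : r ≤ x' := by
    rw [auxM_mem_odd r (nxc γ) x' 1 _ (by omega)] at hb2
    rcases hb2 with ⟨he, -⟩ | ⟨-, hc⟩
    · exact absurd he (by rw [hng] at *; exact nxc_ne3 γ)
    · omega
  -- membership builders and extractors for the third colour γ₂ = nxc (nxc γ)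
  have memU_odd : ∀ i, i % 2 = 1 → 2*r+1 ≤ 2*x+i → nxc (nxc γ) ∈ auxM r γ x i := by
    intro i hi hc
    rw [auxM_mem_odd _ _ _ _ _ hi]
    exact Or.inr ⟨rfl, hc⟩
  have memU_even : ∀ i, i % 2 = 0 → 2*x+2 ≤ i → nxc (nxc γ) ∈ auxM r γ x i := by
    intro i hi hc
    rw [auxM_mem_even _ _ _ _ _ hi]
    exact Or.inr (Or.inl ⟨rfl, hc⟩)
  have memV_odd : ∀ i, i % 2 = 1 → 2*x'+1 ≤ 2*r+i → nxc (nxc γ) ∈ auxM r (nxc γ) x' i := by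
    intro i hi hc
    rw [auxM_mem_odd _ _ _ _ _ hi]
    exact Or.inl ⟨rfl, hc⟩
  have memV_even : ∀ i, i % 2 = 0 → 4*r+2 ≤ 2*x'+i → nxc (nxc γ) ∈ auxM r (nxc γ) x' i := by
    intro i hi hc
    rw [auxM_mem_even _ _ _ _ _ hi]
    exact Or.inr (Or.inr ⟨rfl, hc⟩)
  have extU_odd : ∀ i, i % 2 = 1 → nxc (nxc γ) ∈ auxM r γ x i → 2*r+1 ≤ 2*x+i := by
    intro i hi hm
    rw [auxM_mem_odd _ _ _ _ _ hi] at hm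
    rcases hm with ⟨he, -⟩ | ⟨-, hc⟩
    · exact absurd he.symm (nxc_ne2 γ)
    · exact hc
  have extU_even : ∀ i, i % 2 = 0 → nxc (nxc γ) ∈ auxM r γ x i → 2*x+2 ≤ i := by
    intro i hi hm
    rw [auxM_mem_even _ _ _ _ _ hi] at hm
    rcases hm with he | ⟨-, hc⟩ | ⟨he, -⟩
    · exact absurd he.symm (nxc_ne3 γ)
    · exact hc
    · exact absurd he.symm (nxc_ne2 γ)
  have extV_odd : ∀ i, i % 2 = 1 → nxc (nxc γ) ∈ auxM r (nxc γ) x' i → 2*x'+1 ≤ 2*r+i := by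
    intro i hi hm
    rw [auxM_mem_odd _ _ _ _ _ hi] at hm
    rcases hm with ⟨-, hc⟩ | ⟨he, -⟩
    · exact hc
    · rw [hng] at he
      exact absurd he.symm (nxc_ne3 γ)
  have extV_even : ∀ i, i % 2 = 0 → nxc (nxc γ) ∈ auxM r (nxc γ) x' i → 4*r+2 ≤ 2*x'+i := by
    intro i hi hm
    rw [auxM_mem_even _ _ _ _ _ hi] at hm
    rcases hm with he | ⟨he, -⟩ | ⟨-, hc⟩
    · exact absurd he ((nxc_ne2 γ).symm)
    · rw [hng] at he
      exact absurd he.symm (nxc_ne3 γ)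
    · exact hc
  have T1 : 2*x+3 ≤ r → x' ≤ x+r+1 := by
    intro h
    have h1 := memU_even (2*x+2) (by omega) (le_refl _)
    have h2 := hincl1 (2*x+2) (by omega) _ h1
    have h3 := extV_odd (2*x+2+1) (by omega) h2
    omega
  have T4 : 3*r+3 ≤ 2*x' → x' ≤ x+r+1 := by
    intro h
    have h1 := memV_even (4*r+2-2*x') (by omega) (by omega)
    have h2 := hincl2 (4*r+2-2*x') (by omega) _ h1
    have h3 := extU_odd (4*r+2-2*x'+1) (by omega) h2
    omega
  have T3 : ∀ i, i ≤ r → i % 2 = 0 → 2*x+2 ≤ i → 4*r+2 ≤ 2*x'+i → False := by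
    intro i h1 h2 h3 h4
    exact hdisj i h1 _ (memU_even i h2 h3) (memV_even i h2 h4)
  have T2 : ∀ i, i ≤ r → i % 2 = 1 → 2*r+1 ≤ 2*x+i → 2*x'+1 ≤ 2*r+i → False := by
    intro i h1 h2 h3 h4
    exact hdisj i h1 _ (memU_odd i h2 h3) (memV_odd i h2 h4)
  have T5 : r+2 ≤ 2*x → x+r ≤ x' := by
    intro h
    have h1 := memU_odd (2*(r-x)+1) (by omega) (by omega)
    have h2 := hincl1 (2*(r-x)+1) (by omega) _ h1
    have h3 := extV_even (2*(r-x)+1+1) (by omega) h2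
    omega
  have T6 : 2*x' ≤ 3*r-2 → x+r ≤ x' := by
    intro h
    have h1 := memV_odd (2*(x'-r)+1) (by omega) (by omega)
    have h2 := hincl2 (2*(x'-r)+1) (by omega) _ h1
    have h3 := extU_even (2*(x'-r)+1+1) (by omega) h2
    omega
  refine ⟨hx_r, hr_x', ?_, ?_⟩
  · by_contra hcon
    push_neg at hcon
    rcases le_or_gt (r+2) (2*x) with h | h
    · exact absurd (T5 h) (by omega)
    · rcases le_or_gt (2*x') (3*r-2) with h' | h'
      · exact absurd (T6 h') (by omega)
      · exact T2 r (le_refl r) (by omega) (by omega) (by omega)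
  · by_contra hcon
    push_neg at hcon
    rcases le_or_gt (2*x+3) r with h | h
    · exact absurd (T1 h) (by omega)
    · rcases le_or_gt (3*r+3) (2*x') with h' | h'
      · exact absurd (T4 h') (by omega)
      · exact T3 (2*x+2) (by omega) (by omega) (by omega) (by omega)

end Core

section HardMain

open PGraph

theorem aux_mk_left (m : ℕ) {a b : ℕ} (h : 2*b = 2*a + 1 + m ∨ 2*b + m = 2*a + 1) :
    (2*(b:ℤ)) ≡ 2*(a:ℤ) + 1 [ZMOD (m:ℤ)] := by
  rcases h with h | h
  · refine Int.modEq_iff_dvd.mpr ⟨-1, ?_⟩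
    have := congrArg (Nat.cast : ℕ → ℤ) h
    push_cast at this
    linarith
  · refine Int.modEq_iff_dvd.mpr ⟨1, ?_⟩
    have := congrArg (Nat.cast : ℕ → ℤ) h
    push_cast at this
    linarith

theorem aux_mk_right (m : ℕ) {a b : ℕ} (h : 2*b + 1 = 2*a + m ∨ 2*b + 1 + m = 2*a) :
    (2*(b:ℤ)) + 1 ≡ 2*(a:ℤ) [ZMOD (m:ℤ)] := by
  rcases h with h | h
  · refine Int.modEq_iff_dvd.mpr ⟨-1, ?_⟩
    have := congrArg (Nat.cast : ℕ → ℤ) h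
    push_cast at this
    linarith
  · refine Int.modEq_iff_dvd.mpr ⟨1, ?_⟩
    have := congrArg (Nat.cast : ℕ → ℤ) h
    push_cast at this
    linarith

theorem aux_hard (G : PGraph) {r s : ℕ} (hrs : s < r)
    (c : (G.subdiv s).V → Fin 3)
    (hc : ∀ x y, (G.subdiv s).walkLen (2*r+1) x y → c x ≠ c y) :
    ∃ ψ : G.V → Fin (6*r+3), ∀ u v, G.Adj u v →
      (circGraph (6*r+3) (3*r+1-s)).Adj (ψ u) (ψ v) := by
  classical
  have hr : 1 ≤ r := by omega
  have hcl : ∀ v : (G.subdiv s).V, (∃ w, (G.subdiv s).Adj v w) →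
      ∃ x, x ≤ 2*r ∧ ∀ i, i ≤ r → auxS (G.subdiv s) c v i = auxM r (c v) x i := by
    intro v hni
    exact aux_classify r hr (auxS (G.subdiv s) c v) (c v) (auxS_zero (G.subdiv s) c v)
      (fun i _ => auxS_nonempty (G.subdiv s) c v hni i)
      (fun i _ => auxS_chain (G.subdiv s) c v hni i)
      (fun i j hir hjr hpar => auxS_disj (G.subdiv s) c (R := r) hc v hni i j (by omega) (by omega))
  have hxe : ∀ v : (G.subdiv s).V, ∃ x, x ≤ 2*r ∧ ((∃ w, (G.subdiv s).Adj v w) →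
      ∀ i, i ≤ r → auxS (G.subdiv s) c v i = auxM r (c v) x i) := by
    intro v
    by_cases h : ∃ w, (G.subdiv s).Adj v w
    · obtain ⟨x, hx1, hx2⟩ := hcl v h
      exact ⟨x, hx1, fun _ => hx2⟩
    · exact ⟨0, by omega, fun hcon => absurd hcon h⟩
  choose xv hxv1 hxv2 using hxe
  set Λ : (G.subdiv s).V → ℕ := fun v => (2*r+1) * (c v).val + xv v with hΛ
  have hΛlt : ∀ v, Λ v < 6*r+3 := by
    intro v
    have h1 := hxv1 v
    have h2 : (c v).val < 3 := (c v).isLt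
    have h3 := Nat.mul_le_mul_left (2*r+1) (show (c v).val ≤ 2 by omega)
    simp only [hΛ]
    omega
  have hedge : ∀ u v : (G.subdiv s).V, (G.subdiv s).Adj u v →
      2*((Λ v : ℕ):ℤ) ≡ 2*((Λ u : ℕ):ℤ) + 1 [ZMOD ((6*r+3 : ℕ):ℤ)] ∨
      2*((Λ v : ℕ):ℤ) + 1 ≡ 2*((Λ u : ℕ):ℤ) [ZMOD ((6*r+3 : ℕ):ℤ)] := by
    intro u v huv
    have hniu : ∃ w, (G.subdiv s).Adj u w := ⟨v, huv⟩
    have hniv : ∃ w, (G.subdiv s).Adj v w := ⟨u, (G.subdiv s).symm _ _ huv⟩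
    have hsu := hxv2 u hniu
    have hsv := hxv2 v hniv
    have hcv0 : c v ∈ auxM r (c u) (xv u) 1 := by
      rw [← hsu 1 hr]
      exact ⟨v, rfl, u, (G.subdiv s).symm _ _ huv, rfl⟩
    have hcu0 : c u ∈ auxM r (c v) (xv v) 1 := by
      rw [← hsv 1 hr]
      exact ⟨u, rfl, v, huv, rfl⟩
    have hincl1 : ∀ i, i + 1 ≤ r → ∀ δ, δ ∈ auxM r (c u) (xv u) i →
        δ ∈ auxM r (c v) (xv v) (i+1) := by
      intro i hi δ hδ
      rw [← hsu i (by omega)] at hδ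
      rw [← hsv (i+1) (by omega)]
      exact auxS_cross_incl (G.subdiv s) c huv i hδ
    have hincl2 : ∀ i, i + 1 ≤ r → ∀ δ, δ ∈ auxM r (c v) (xv v) i →
        δ ∈ auxM r (c u) (xv u) (i+1) := by
      intro i hi δ hδ
      rw [← hsv i (by omega)] at hδ
      rw [← hsu (i+1) (by omega)]
      exact auxS_cross_incl (G.subdiv s) c ((G.subdiv s).symm _ _ huv) i hδ
    have hdisj12 : ∀ i, i ≤ r → ∀ δ, δ ∈ auxM r (c u) (xv u) i →
        δ ∉ auxM r (c v) (xv v) i := by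
      intro i hi δ hδ hδ'
      rw [← hsu i hi] at hδ
      rw [← hsv i hi] at hδ'
      exact auxS_cross_disj (G.subdiv s) c (R := r) hc huv i i (by omega) (by omega) δ hδ hδ'
    have hdisj21 : ∀ i, i ≤ r → ∀ δ, δ ∈ auxM r (c v) (xv v) i →
        δ ∉ auxM r (c u) (xv u) i := by
      intro i hi δ hδ hδ'
      exact hdisj12 i hi δ hδ' hδ
    have hcvmem := (auxM_mem_odd r (c u) (xv u) 1 (c v) (by omega)).mp hcv0
    have hcu3 : (c u).val < 3 := (c u).isLt
    have hcv3 : (c v).val < 3 := (c v).isLt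
    rcases hcvmem with ⟨hcveq, -⟩ | ⟨hcveq, -⟩
    · -- c v = nxc (c u)
      rw [hcveq] at hcu0 hincl1 hincl2 hdisj12
      have hb1 : nxc (c u) ∈ auxM r (c u) (xv u) 1 := by rw [← hcveq]; exact hcv0
      obtain ⟨hw1, hw2, hw3, hw4⟩ := aux_core r hr (c u) (xv u) (xv v)
        (hxv1 u) (hxv1 v) hb1 hcu0 hincl1 hincl2 hdisj12
      have hval : (c v).val = ((c u).val + 1) % 3 := by rw [hcveq]; rfl
      have hΛu : Λ u = (2*r+1) * (c u).val + xv u := by simp only [hΛ]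
      have hΛv : Λ v = (2*r+1) * (c v).val + xv v := by simp only [hΛ]
      have hcases : (c u).val = 0 ∨ (c u).val = 1 ∨ (c u).val = 2 := by omega
      have hxcase : xv v = xv u + r ∨ xv v = xv u + r + 1 := by omega
      rcases hxcase with hx | hx
      · right
        apply aux_mk_right (6*r+3)
        rcases hcases with h0 | h0 | h0 <;> rw [h0] at hval hΛu <;>
          simp only [show ((0:ℕ)+1)%3 = 1 from rfl, show ((1:ℕ)+1)%3 = 2 from rfl,
            show ((2:ℕ)+1)%3 = 0 from rfl] at hval <;> rw [hval] at hΛv <;> omega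
      · left
        apply aux_mk_left (6*r+3)
        rcases hcases with h0 | h0 | h0 <;> rw [h0] at hval hΛu <;>
          simp only [show ((0:ℕ)+1)%3 = 1 from rfl, show ((1:ℕ)+1)%3 = 2 from rfl,
            show ((2:ℕ)+1)%3 = 0 from rfl] at hval <;> rw [hval] at hΛv <;> omega
    · -- c v = nxc (nxc (c u)), i.e. c u = nxc (c v)
      have hswap : c u = nxc (c v) := by rw [hcveq]; exact (nxc3 (c u)).symm
      rw [hswap] at hcv0 hincl1 hincl2 hdisj21
      have hb1 : nxc (c v) ∈ auxM r (c v) (xv v) 1 := by rw [← hswap]; exact hcu0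
      obtain ⟨hw1, hw2, hw3, hw4⟩ := aux_core r hr (c v) (xv v) (xv u)
        (hxv1 v) (hxv1 u) hb1 hcv0 hincl2 hincl1 hdisj21
      have hval : (c u).val = ((c v).val + 1) % 3 := by rw [hswap]; rfl
      have hΛu : Λ u = (2*r+1) * (c u).val + xv u := by simp only [hΛ]
      have hΛv : Λ v = (2*r+1) * (c v).val + xv v := by simp only [hΛ]
      have hcases : (c v).val = 0 ∨ (c v).val = 1 ∨ (c v).val = 2 := by omega
      have hxcase : xv u = xv v + r ∨ xv u = xv v + r + 1 := by omega
      rcases hxcase with hx | hx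
      · left
        apply aux_mk_left (6*r+3)
        rcases hcases with h0 | h0 | h0 <;> rw [h0] at hval hΛv <;>
          simp only [show ((0:ℕ)+1)%3 = 1 from rfl, show ((1:ℕ)+1)%3 = 2 from rfl,
            show ((2:ℕ)+1)%3 = 0 from rfl] at hval <;> rw [hval] at hΛu <;> omega
      · right
        apply aux_mk_right (6*r+3)
        rcases hcases with h0 | h0 | h0 <;> rw [h0] at hval hΛv <;>
          simp only [show ((0:ℕ)+1)%3 = 1 from rfl, show ((1:ℕ)+1)%3 = 2 from rfl,
            show ((2:ℕ)+1)%3 = 0 from rfl] at hval <;> rw [hval] at hΛu <;> omega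
  -- assemble the circular map
  refine ⟨fun u => ⟨Λ (Sum.inl u), hΛlt _⟩, ?_⟩
  intro u v huv
  have hwalk : (G.subdiv s).walkLen (2*s+1) (Sum.inl u) (Sum.inl v) := aux_gadget_walk G s huv
  have hstep : ∀ a b : (G.subdiv s).V, (G.subdiv s).Adj a b →
      (fun z => 2*((Λ z : ℕ):ℤ)) b ≡ (fun z => 2*((Λ z : ℕ):ℤ)) a + 1 [ZMOD ((6*r+3:ℕ):ℤ)] ∨
      (fun z => 2*((Λ z : ℕ):ℤ)) b + 1 ≡ (fun z => 2*((Λ z : ℕ):ℤ)) a [ZMOD ((6*r+3:ℕ):ℤ)] :=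
    fun a b hab => hedge a b hab
  obtain ⟨fq, wq, hfw, hmod⟩ := aux_step_walk (G.subdiv s) (6*r+3) (fun z => 2*((Λ z : ℕ):ℤ)) hstep _ hwalk
  have hmod' : 2*((Λ (Sum.inl v) : ℕ):ℤ) + (wq:ℤ) ≡ 2*((Λ (Sum.inl u) : ℕ):ℤ) + (fq:ℤ)
      [ZMOD ((6*r+3:ℕ):ℤ)] := hmod
  have hext := aux_extract (6*r+3) (by omega) hfw (by omega) (by omega)
    (by positivity : (0:ℤ) ≤ ((Λ (Sum.inl u) : ℕ):ℤ))
    (by exact_mod_cast hΛlt (Sum.inl u))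
    (by positivity : (0:ℤ) ≤ ((Λ (Sum.inl v) : ℕ):ℤ))
    (by exact_mod_cast hΛlt (Sum.inl v)) hmod'
  show ((3*r+1-s : ℕ):ℤ) ≤ |((Λ (Sum.inl u) : ℕ):ℤ) - ((Λ (Sum.inl v) : ℕ):ℤ)| ∧
    |((Λ (Sum.inl u) : ℕ):ℤ) - ((Λ (Sum.inl v) : ℕ):ℤ)| ≤ ((6*r+3 : ℕ):ℤ) - ((3*r+1-s : ℕ):ℤ)
  set P := ((Λ (Sum.inl u) : ℕ):ℤ)
  set Q := ((Λ (Sum.inl v) : ℕ):ℤ)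
  rcases hext with ⟨he1, he2⟩ | ⟨he1, he2⟩
  · rw [abs_sub_comm, abs_of_nonneg (by omega : (0:ℤ) ≤ Q - P)]
    constructor <;> [skip; skip] <;> omega
  · rw [abs_of_nonneg (by omega : (0:ℤ) ≤ P - Q)]
    constructor <;> [skip; skip] <;> omega

end HardMain

section Wrapper

open PGraph

theorem aux_hard_main (G : PGraph) (hf : Finite G.V) {r s : ℕ} (hrs : s < r)
    (hog : G.ltOddGirth ((2*(r:ℚ)+1)/(2*(s:ℚ)+1)))
    (hchrom : ((G.subdiv s).pow (2*r+1)).chromatic ≤ 3) :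
    ∃ nn dd : ℕ, 0 < dd ∧ 2*dd ≤ nn ∧ Nat.gcd nn dd = 1 ∧ nn < 3*dd ∧
      G.homTo (circGraph nn dd) := by
  classical
  haveI := hf
  have hfin : Finite ((G.subdiv s).V) := by
    unfold subdiv
    infer_instance
  obtain ⟨N, ⟨eqv⟩⟩ := Finite.exists_equiv_fin ((G.subdiv s).V)
  have hloopless := aux_A3 hog hrs
  have hhomN : ((G.subdiv s).pow (2*r+1)).homTo (completeGraph N) := by
    refine ⟨eqv, fun x y hxy => ?_⟩
    intro he
    have hxyeq : x = y := eqv.injective he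
    subst hxyeq
    exact hloopless x hxy
  have hmem : ((G.subdiv s).pow (2*r+1)).homTo
      (completeGraph (((G.subdiv s).pow (2*r+1)).chromatic)) :=
    Nat.sInf_mem (s := {m : ℕ | ((G.subdiv s).pow (2*r+1)).homTo (completeGraph m)}) ⟨N, hhomN⟩
  have hhom3 : ((G.subdiv s).pow (2*r+1)).homTo (completeGraph 3) :=
    aux_homTo_trans hmem (aux_hom_complete_mono hchrom)
  obtain ⟨c, hcadj⟩ := hhom3
  obtain ⟨ψ, hψ⟩ := aux_hard G hrs c (fun x y h => hcadj x y h)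
  have hD : 0 < 3*r+1-s := by omega
  have hDM : 3*r+1-s ≤ 6*r+3 := by omega
  have hred := aux_circ_reduce (6*r+3) (3*r+1-s) hD hDM
  have hg0 : 0 < Nat.gcd (6*r+3) (3*r+1-s) := Nat.gcd_pos_of_pos_right _ hD
  have hgM : Nat.gcd (6*r+3) (3*r+1-s) ∣ 6*r+3 := Nat.gcd_dvd_left _ _
  have hgD : Nat.gcd (6*r+3) (3*r+1-s) ∣ 3*r+1-s := Nat.gcd_dvd_right _ _
  set g := Nat.gcd (6*r+3) (3*r+1-s) with hg
  refine ⟨(6*r+3)/g, (3*r+1-s)/g, ?_, ?_, ?_, ?_, ?_⟩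
  · exact Nat.div_pos (Nat.le_of_dvd hD hgD) hg0
  · have h2 : (2*((3*r+1-s)/g)) * g ≤ ((6*r+3)/g) * g := by
      rw [mul_assoc, Nat.div_mul_cancel hgD, Nat.div_mul_cancel hgM]
      omega
    exact Nat.le_of_mul_le_mul_right h2 hg0
  · exact Nat.coprime_div_gcd_div_gcd hg0
  · have h2 : ((6*r+3)/g) * g < (3*((3*r+1-s)/g)) * g := by
      rw [mul_assoc, Nat.div_mul_cancel hgD, Nat.div_mul_cancel hgM]
      omega
    exact Nat.lt_of_mul_lt_mul_right h2
  · exact aux_homTo_trans ⟨ψ, hψ⟩ hred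

theorem aux_V_nonempty (G : PGraph) (h3 : G.chromatic = 3) : Nonempty G.V := by
  by_contra h
  rw [not_nonempty_iff] at h
  have : G.homTo (completeGraph 0) := ⟨fun v => (h.false v).elim, fun u v _ => (h.false u).elim⟩
  have := aux_chromatic_le this
  omega

theorem aux_hom3 (G : PGraph) (h3 : G.chromatic = 3) : G.homTo (completeGraph 3) := by
  have hne : {m : ℕ | G.homTo (completeGraph m)}.Nonempty := by
    by_contra h
    rw [Set.not_nonempty_iff_eq_empty] at h
    have : G.chromatic = 0 := by
      unfold chromatic
      rw [h]
      exact Nat.sInf_empty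
    omega
  have := aux_chromatic_hom hne
  rwa [h3] at this

theorem aux_noloop (G : PGraph) (h3 : G.chromatic = 3) : ∀ v, ¬ G.Adj v v := by
  obtain ⟨c, hc⟩ := aux_hom3 G h3
  intro v hv
  exact hc v v hv rfl

theorem aux_hom_circ31 (G : PGraph) (h3 : G.chromatic = 3) : G.homTo (circGraph 3 1) := by
  obtain ⟨c, hc⟩ := aux_hom3 G h3
  refine ⟨c, fun u v huv => ?_⟩
  have hne := hc u v huv
  have h1 : (c u).val < 3 := (c u).isLt
  have h2 : (c v).val < 3 := (c v).isLt
  have h3' : (c u).val ≠ (c v).val := fun he => hne (Fin.ext he)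
  refine ⟨?_, ?_⟩
  · have hne0 : ((c u).val : ℤ) - ((c v).val : ℤ) ≠ 0 := by
      intro hc0
      exact h3' (by omega)
    have := Int.one_le_abs hne0
    exact_mod_cast this
  · have := abs_le.mpr (⟨by omega, by omega⟩ :
      -((3:ℤ) - 1) ≤ ((c u).val : ℤ) - ((c v).val : ℤ) ∧ ((c u).val : ℤ) - ((c v).val : ℤ) ≤ (3:ℤ) - 1)
    calc |((c u).val : ℤ) - ((c v).val : ℤ)| ≤ (3:ℤ) - 1 := this
      _ ≤ ((3:ℕ):ℤ) - ((1:ℕ):ℤ) := by norm_num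

theorem aux_sub0 (G : PGraph) : ((G.subdiv 0).pow 1).chromatic = G.chromatic := by
  have hsets : {m : ℕ | ((G.subdiv 0).pow 1).homTo (completeGraph m)}
      = {m : ℕ | G.homTo (completeGraph m)} := by
    ext m
    constructor
    · rintro ⟨g, hg⟩
      exact ⟨fun u => g (Sum.inl u), fun u v huv => hg _ _ ⟨Sum.inl v, ⟨rfl, huv⟩, rfl⟩⟩
    · rintro ⟨g, hg⟩
      refine ⟨fun x => Sum.elim g (fun pe => (pe.2).elim0) x, fun x y hxy => ?_⟩
      obtain ⟨w, hxw, hwy⟩ := hxy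
      have hweq : w = y := hwy
      subst hweq
      rcases x with u | ⟨e, k⟩
      · rcases w with u' | ⟨e, k⟩
        · exact hg _ _ hxw.2
        · exact k.elim0
      · exact k.elim0
  unfold chromatic
  rw [hsets]

end Wrapper

theorem powerThickness_eq_one_iff_circChrom' (G : PGraph) (hG : G.Nonbipartite)
    (hf : Finite G.V) (h3 : G.chromatic = 3) :
    (G.powerThickness 0 = 1 ↔ G.circChrom = 3) := by
  classical
  obtain ⟨n₀, v₀, hodd₀, hw₀⟩ := hG
  have hnoloop := aux_noloop G h3
  have hSθdef : G.powerThickness 0 = sSup {x : ℝ | ∃ r s : ℕ,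
      x = (2*(r:ℝ)+1)/(2*(s:ℝ)+1) ∧
      ((((G.subdiv s).pow (2*r+1)).chromatic : ℤ) ≤ (G.chromatic : ℤ) + 0) ∧
      G.ltOddGirth ((2*(r:ℚ)+1)/(2*(s:ℚ)+1))} := rfl
  have hScdef : G.circChrom = sInf {x : ℝ | ∃ n d : ℕ, 0 < d ∧ 2 * d ≤ n ∧ Nat.gcd n d = 1 ∧
      x = (n : ℝ) / (d : ℝ) ∧ G.homTo (circGraph n d)} := rfl
  have h3mem : (3:ℝ) ∈ {x : ℝ | ∃ n d : ℕ, 0 < d ∧ 2 * d ≤ n ∧ Nat.gcd n d = 1 ∧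
      x = (n : ℝ) / (d : ℝ) ∧ G.homTo (circGraph n d)} :=
    ⟨3, 1, one_pos, by norm_num, by norm_num, by norm_num, aux_hom_circ31 G h3⟩
  have hbddS2 : BddBelow {x : ℝ | ∃ n d : ℕ, 0 < d ∧ 2 * d ≤ n ∧ Nat.gcd n d = 1 ∧
      x = (n : ℝ) / (d : ℝ) ∧ G.homTo (circGraph n d)} := by
    refine ⟨0, ?_⟩
    rintro y ⟨n, d, hd, -, -, rfl, -⟩
    positivity
  have h1mem : (1:ℝ) ∈ {x : ℝ | ∃ r s : ℕ,
      x = (2*(r:ℝ)+1)/(2*(s:ℝ)+1) ∧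
      ((((G.subdiv s).pow (2*r+1)).chromatic : ℤ) ≤ (G.chromatic : ℤ) + 0) ∧
      G.ltOddGirth ((2*(r:ℚ)+1)/(2*(s:ℚ)+1))} := by
    refine ⟨0, 0, by norm_num, ?_, ?_⟩
    · have he := aux_sub0 G
      have he2 : ((G.subdiv 0).pow (2*0+1)).chromatic = G.chromatic := he
      rw [he2]
      omega
    · intro k hodd hex
      have hk1 : k ≠ 1 := by
        intro h1
        obtain ⟨v, hv⟩ := hex
        rw [h1] at hv
        obtain ⟨w, hw, hwv⟩ := hv
        have hwv' : w = v := hwv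
        rw [hwv'] at hw
        exact hnoloop v hw
      have hk3 : 3 ≤ k := by
        rcases hodd with ⟨m, hm⟩
        omega
      have : (1:ℚ) < k := by exact_mod_cast (by omega : 1 < k)
      calc (2*((0:ℕ):ℚ)+1)/(2*((0:ℕ):ℚ)+1) = 1 := by norm_num
        _ < k := this
  have hbddS1 : BddAbove {x : ℝ | ∃ r s : ℕ,
      x = (2*(r:ℝ)+1)/(2*(s:ℝ)+1) ∧
      ((((G.subdiv s).pow (2*r+1)).chromatic : ℤ) ≤ (G.chromatic : ℤ) + 0) ∧
      G.ltOddGirth ((2*(r:ℚ)+1)/(2*(s:ℚ)+1))} := by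
    refine ⟨(n₀:ℝ), ?_⟩
    rintro x ⟨r, s, rfl, -, hogx⟩
    have hq := hogx n₀ hodd₀ ⟨v₀, hw₀⟩
    have hq2 : (((2*(r:ℚ)+1)/(2*(s:ℚ)+1) : ℚ) : ℝ) < ((n₀:ℚ) : ℝ) := by
      exact_mod_cast hq
    push_cast at hq2
    linarith
  constructor
  · intro hθ
    rw [hSθdef] at hθ
    rw [hScdef]
    refine le_antisymm (csInf_le hbddS2 h3mem) ?_
    by_contra hlt
    push_neg at hlt
    obtain ⟨y, hymem, hylt⟩ := exists_lt_of_csInf_lt ⟨3, h3mem⟩ hlt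
    obtain ⟨n, d, hd, h2d, hgcd, hyeq, f, hfc⟩ := hymem
    have hn3d : n < 3*d := by
      have hr : (n:ℝ) < 3*d := by
        rw [hyeq] at hylt
        rw [div_lt_iff₀ (by exact_mod_cast hd : (0:ℝ) < d)] at hylt
        linarith
      exact_mod_cast hr
    rcases eq_or_lt_of_le h2d with heq | hlt2
    · -- n = 2 d forces K₂
      have hdvd : d ∣ n := ⟨2, by omega⟩
      have hgg : Nat.gcd n d = d := Nat.gcd_eq_right hdvd
      have hd1 : d = 1 := by omega
      have hn2 : n = 2 := by omega
      subst hn2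
      subst hd1
      have hwimg : (circGraph 2 1).walkLen n₀ (f v₀) (f v₀) := aux_hom_walk hfc n₀ hw₀
      have := (aux_K2_walk n₀ (f v₀) (f v₀) hwimg).mp rfl
      rcases hodd₀ with ⟨m, hm⟩
      omega
    · -- proper circular colouring with ratio < 3 : build a good power colouring
      have hloopfree : ∀ v, ¬ G.Adj v v := by
        intro v hv
        obtain ⟨hc1, -⟩ := hfc v v hv
        simp at hc1
        have : (0:ℤ) < d := by exact_mod_cast hd
        omega
      have hhomP := aux_easy G hd (by omega) (by omega) f hfc
      have hx₀mem : ((2*((5*n+1 : ℕ):ℝ)+1)/(2*((5*n : ℕ):ℝ)+1)) ∈ {x : ℝ | ∃ r s : ℕ,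
          x = (2*(r:ℝ)+1)/(2*(s:ℝ)+1) ∧
          ((((G.subdiv s).pow (2*r+1)).chromatic : ℤ) ≤ (G.chromatic : ℤ) + 0) ∧
          G.ltOddGirth ((2*(r:ℚ)+1)/(2*(s:ℚ)+1))} := by
        refine ⟨5*n+1, 5*n, rfl, ?_, ?_⟩
        · have hch := aux_chromatic_le hhomP
          rw [h3]
          have : (((G.subdiv (5*n)).pow (2*(5*n+1)+1)).chromatic : ℤ) ≤ 3 := by
            exact_mod_cast hch
          omega
        · intro k hodd hex
          have hk1 : k ≠ 1 := by
            intro h1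
            obtain ⟨v, hv⟩ := hex
            rw [h1] at hv
            obtain ⟨w, hw, hwv⟩ := hv
            have hwv' : w = v := hwv
            rw [hwv'] at hw
            exact hloopfree v hw
          have hk3 : 3 ≤ k := by
            rcases hodd with ⟨m, hm⟩
            omega
          have hn1 : (1:ℚ) ≤ (n:ℚ) := by exact_mod_cast (by omega : 1 ≤ n)
          rw [div_lt_iff₀ (by positivity)]
          push_cast
          have key : (3:ℚ)*(2*(5*(n:ℚ))+1) ≤ (k:ℚ)*(2*(5*(n:ℚ))+1) := by
            apply mul_le_mul_of_nonneg_right _ (by positivity)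
            exact_mod_cast hk3
          linarith
      have hle := le_csSup hbddS1 hx₀mem
      rw [hθ] at hle
      have hgt : (1:ℝ) < (2*((5*n+1 : ℕ):ℝ)+1)/(2*((5*n : ℕ):ℝ)+1) := by
        rw [lt_div_iff₀ (by positivity)]
        push_cast
        linarith
      linarith
  · intro hχ
    rw [hScdef] at hχ
    rw [hSθdef]
    refine le_antisymm (csSup_le ⟨1, h1mem⟩ ?_) (le_csSup hbddS1 h1mem)
    rintro x ⟨r, s, rfl, hchromx, hogx⟩
    rcases le_or_gt r s with hrs | hrs
    · rw [div_le_one (by positivity)]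
      have : (r:ℝ) ≤ s := by exact_mod_cast hrs
      linarith
    · exfalso
      have hchromN : ((G.subdiv s).pow (2*r+1)).chromatic ≤ 3 := by
        rw [h3] at hchromx
        have hz : (((G.subdiv s).pow (2*r+1)).chromatic : ℤ) ≤ 3 := by
          push_cast at hchromx
          linarith
        exact_mod_cast hz
      obtain ⟨nn, dd, hdd, h2dd, hgcd, hlt3, hhom⟩ := aux_hard_main G hf hrs hogx hchromN
      have hmem2 : ((nn:ℝ)/dd) ∈ {x : ℝ | ∃ n d : ℕ, 0 < d ∧ 2 * d ≤ n ∧ Nat.gcd n d = 1 ∧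
          x = (n : ℝ) / (d : ℝ) ∧ G.homTo (circGraph n d)} :=
        ⟨nn, dd, hdd, h2dd, hgcd, rfl, hhom⟩
      have hle := csInf_le hbddS2 hmem2
      rw [hχ] at hle
      have hlt' : (nn:ℝ)/dd < 3 := by
        rw [div_lt_iff₀ (by exact_mod_cast hdd : (0:ℝ) < dd)]
        exact_mod_cast hlt3
      linarith

/-- For a non-bipartite graph with `χ(G) = 3`,
`θ(G) = 1` iff `χ_c(G) = 3`. -/
theorem powerThickness_eq_one_iff_circChrom (G : PGraph) (hG : G.Nonbipartite)
    (hf : Finite G.V) (h3 : G.chromatic = 3) :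
    (G.powerThickness 0 = 1 ↔ G.circChrom = 3) := by
  exact powerThickness_eq_one_iff_circChrom' G hG hf h3
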